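/- Let G be a generic symmetric network congestion game on an extension-parallel graph with n players and let B be a subgame-perfect outcome of G with respect to the order 1,…,n. Then c_1(B) ≤ c_2(B) ≤ … ≤ c_n(B). Moreover, for every k ∈ {1,…,n} and every k-lookahead outcome A of G with respect to the order 1,…,n, c_1(B) ≤ c_1(A). -/

import Mathlib

/-- A congestion game with `n` players on a finite resource type `R`:
each player has a finite set of actions (each action a set of resources),
and each resource has a delay function `ℕ → ℝ`. -/
structure CGame (R : Type) [DecidableEq R] [Fintype R] (n : ℕ) where
  actions : Fin n → Finset (Finset R)
  delay : R → ℕ → ℝ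

namespace CGame

variable {R : Type} [DecidableEq R] [Fintype R] {n : ℕ}

/-- The congestion `x(A)_r`: number of players using resource `r` in profile `A`. -/
def congestion (_G : CGame R n) (A : Fin n → Finset R) (r : R) : ℕ :=
  (Finset.univ.filter fun i => r ∈ A i).card

/-- The cost of player `i` in profile `A`. -/
def cost (G : CGame R n) (A : Fin n → Finset R) (i : Fin n) : ℝ :=
  ∑ r ∈ A i, G.delay r (G.congestion A r)

/-- `A` is an outcome: each player plays one of his actions. -/
def IsOutcome (G : CGame R n) (A : Fin n → Finset R) : Prop :=
  ∀ i, A i ∈ G.actions i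

/-- `A` is a (pure) Nash equilibrium. -/
def IsNash (G : CGame R n) (A : Fin n → Finset R) : Prop :=
  G.IsOutcome A ∧ ∀ i, ∀ B ∈ G.actions i, G.cost A i ≤ G.cost (Function.update A i B) i

/-- The subgame induced by the first player playing `a`. -/
def subgame (G : CGame R (n + 1)) (a : Finset R) : CGame R n where
  actions := fun i => G.actions i.succ
  delay := fun r y => G.delay r (y + if r ∈ a then 1 else 0)

/-- The subgame induced by the first `m` players playing `P`. -/
def subgameMany {m k : ℕ} (G : CGame R (m + k)) (P : Fin m → Finset R) : CGame R k where
  actions := fun i => G.actions (Fin.natAdd m i)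
  delay := fun r y => G.delay r (y + (Finset.univ.filter fun i : Fin m => r ∈ P i).card)

/-- `G^k`: the game on the first `min k n` players. -/
def truncate (G : CGame R n) (k : ℕ) : CGame R (min k n) where
  actions := fun i => G.actions (Fin.castLE (min_le_right k n) i)
  delay := G.delay

/-- The game reordered so that the player in position `i` is player `σ i`. -/
def reorder (G : CGame R n) (σ : Equiv.Perm (Fin n)) : CGame R n where
  actions := fun i => G.actions (σ i)
  delay := G.delay

/-- Subgame-perfect outcomes with respect to the order `1, …, n`. -/
def IsSPO : {n : ℕ} → CGame R n → (Fin n → Finset R) → Prop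
  | 0, _, _ => True
  | _ + 1, G, A =>
      A 0 ∈ G.actions 0 ∧
      ∃ f : Finset R → (Fin _ → Finset R),
        (∀ a ∈ G.actions 0, IsSPO (G.subgame a) (f a)) ∧
        f (A 0) = Fin.tail A ∧
        ∀ a ∈ G.actions 0,
          G.cost (Fin.cons (A 0) (f (A 0))) 0 ≤ G.cost (Fin.cons a (f a)) 0

/-- `k`-lookahead outcomes with respect to the order `1, …, n`. -/
def IsKLA (k : ℕ) : {n : ℕ} → CGame R n → (Fin n → Finset R) → Prop
  | 0, _, _ => True
  | n + 1, G, A =>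
      (∃ (hk : 0 < min k (n + 1)) (B : Fin (min k (n + 1)) → Finset R),
          IsSPO (G.truncate k) B ∧ B ⟨0, hk⟩ = A 0) ∧
      IsKLA k (G.subgame (A 0)) (Fin.tail A)

/-- `A` is a subgame-perfect outcome of `G` with respect to some order of the players. -/
def IsSPOutcome (G : CGame R n) (A : Fin n → Finset R) : Prop :=
  ∃ σ : Equiv.Perm (Fin n), IsSPO (G.reorder σ) (A ∘ σ)

/-- `A` is a `k`-lookahead outcome of `G` with respect to some order of the players. -/
def IsKLO (k : ℕ) (G : CGame R n) (A : Fin n → Finset R) : Prop :=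
  ∃ σ : Equiv.Perm (Fin n), IsKLA k (G.reorder σ) (A ∘ σ)

/-- The cost of player `i` when only the players in `s` play (profile restricted to `s`). -/
def costOn (G : CGame R n) (s : Finset (Fin n)) (A : Fin n → Finset R) (i : Fin n) : ℝ :=
  ∑ r ∈ A i, G.delay r ((s.filter fun j => r ∈ A j).card)

/-- `G` is generic: in every restriction of the game to a subset of the players,
a player's cost changes whenever his own action changes. -/
def Generic (G : CGame R n) : Prop :=
  ∀ s : Finset (Fin n), ∀ A B : Fin n → Finset R,
    (∀ i ∈ s, A i ∈ G.actions i) → (∀ i ∈ s, B i ∈ G.actions i) →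
    ∀ j ∈ s, A j ≠ B j → G.costOn s A j ≠ G.costOn s B j

/-- Utilitarian social cost. -/
def SC (G : CGame R n) (A : Fin n → Finset R) : ℝ :=
  ∑ i, G.cost A i

/-- Minimum social cost over all outcomes. -/
noncomputable def optSC (G : CGame R n) : ℝ :=
  sInf {y | ∃ A, G.IsOutcome A ∧ y = G.SC A}

/-- The `k`-Lookahead Price of Anarchy. -/
noncomputable def kLPoA (G : CGame R n) (k : ℕ) : ℝ :=
  sSup {y | ∃ A, IsKLO k G A ∧ y = G.SC A / G.optSC}

/-- The Price of Anarchy. -/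
noncomputable def PoA (G : CGame R n) : ℝ :=
  sSup {y | ∃ A, G.IsNash A ∧ y = G.SC A / G.optSC}

/-- Opportunity cost `O_A` of an outcome `A` in a symmetric game with action set `𝒜`. -/
noncomputable def oppCost (G : CGame R n) (𝒜 : Finset (Finset R)) (A : Fin n → Finset R) : ℝ :=
  sInf {y | ∃ P ∈ 𝒜, y = ∑ r ∈ P, G.delay r (G.congestion A r + 1)}

/-- Worst cost (egalitarian social cost) `W_A` of an outcome `A`. -/
noncomputable def worstCost (G : CGame R n) (A : Fin n → Finset R) : ℝ :=
  sSup {y | ∃ i, y = G.cost A i}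

/-- Rosenthal's potential function. -/
def potential (G : CGame R n) (A : Fin n → Finset R) : ℝ :=
  ∑ r : R, ∑ i ∈ Finset.Icc 1 (G.congestion A r), G.delay r i

end CGame
/-- Syntax trees of extension-parallel graphs: a single arc; parallel composition;
series composition of a single arc with an EP graph (arc first or arc last). -/
inductive EPTree : Type
  | edge : EPTree
  | parallel : EPTree → EPTree → EPTree
  | extHead : EPTree → EPTree
  | extTail : EPTree → EPTree

namespace EPTree

/-- The arcs of an extension-parallel graph. -/
def Arc : EPTree → Type
  | edge => Unit
  | parallel t₁ t₂ => t₁.Arc ⊕ t₂.Arc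
  | extHead t => Unit ⊕ t.Arc
  | extTail t => t.Arc ⊕ Unit

def arcDecEq : (t : EPTree) → DecidableEq t.Arc
  | edge => inferInstanceAs (DecidableEq Unit)
  | parallel t₁ t₂ =>
      letI := t₁.arcDecEq; letI := t₂.arcDecEq
      inferInstanceAs (DecidableEq (t₁.Arc ⊕ t₂.Arc))
  | extHead t =>
      letI := t.arcDecEq
      inferInstanceAs (DecidableEq (Unit ⊕ t.Arc))
  | extTail t =>
      letI := t.arcDecEq
      inferInstanceAs (DecidableEq (t.Arc ⊕ Unit))

instance (t : EPTree) : DecidableEq t.Arc := t.arcDecEq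

def arcFintype : (t : EPTree) → Fintype t.Arc
  | edge => inferInstanceAs (Fintype Unit)
  | parallel t₁ t₂ =>
      letI := t₁.arcFintype; letI := t₂.arcFintype
      inferInstanceAs (Fintype (t₁.Arc ⊕ t₂.Arc))
  | extHead t =>
      letI := t.arcFintype
      inferInstanceAs (Fintype (Unit ⊕ t.Arc))
  | extTail t =>
      letI := t.arcFintype
      inferInstanceAs (Fintype (t.Arc ⊕ Unit))

instance (t : EPTree) : Fintype t.Arc := t.arcFintype

/-- The set of arc sets of directed `o`–`d` paths of an extension-parallel graph. -/
def paths : (t : EPTree) → Finset (Finset t.Arc)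
  | edge => {(Finset.univ : Finset Unit)}
  | parallel t₁ t₂ =>
      (t₁.paths.image fun P => P.image Sum.inl) ∪ (t₂.paths.image fun P => P.image Sum.inr)
  | extHead t => t.paths.image fun P => insert (Sum.inl ()) (P.image Sum.inr)
  | extTail t => t.paths.image fun P => insert (Sum.inr ()) (P.image Sum.inl)

end EPTree

/-- Syntax trees of series-parallel graphs: a single arc; series composition;
parallel composition. -/
inductive SPTree : Type
  | edge : SPTree
  | series : SPTree → SPTree → SPTree
  | parallel : SPTree → SPTree → SPTree

namespace SPTree

/-- The arcs of a series-parallel graph. -/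
def Arc : SPTree → Type
  | edge => Unit
  | series t₁ t₂ => t₁.Arc ⊕ t₂.Arc
  | parallel t₁ t₂ => t₁.Arc ⊕ t₂.Arc

def arcDecEq : (t : SPTree) → DecidableEq t.Arc
  | edge => inferInstanceAs (DecidableEq Unit)
  | series t₁ t₂ =>
      letI := t₁.arcDecEq; letI := t₂.arcDecEq
      inferInstanceAs (DecidableEq (t₁.Arc ⊕ t₂.Arc))
  | parallel t₁ t₂ =>
      letI := t₁.arcDecEq; letI := t₂.arcDecEq
      inferInstanceAs (DecidableEq (t₁.Arc ⊕ t₂.Arc))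

instance (t : SPTree) : DecidableEq t.Arc := t.arcDecEq

def arcFintype : (t : SPTree) → Fintype t.Arc
  | edge => inferInstanceAs (Fintype Unit)
  | series t₁ t₂ =>
      letI := t₁.arcFintype; letI := t₂.arcFintype
      inferInstanceAs (Fintype (t₁.Arc ⊕ t₂.Arc))
  | parallel t₁ t₂ =>
      letI := t₁.arcFintype; letI := t₂.arcFintype
      inferInstanceAs (Fintype (t₁.Arc ⊕ t₂.Arc))

instance (t : SPTree) : Fintype t.Arc := t.arcFintype

/-- The set of arc sets of directed `o`–`d` paths of a series-parallel graph. -/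
def paths : (t : SPTree) → Finset (Finset t.Arc)
  | edge => {(Finset.univ : Finset Unit)}
  | series t₁ t₂ =>
      (t₁.paths ×ˢ t₂.paths).image fun p => p.1.image Sum.inl ∪ p.2.image Sum.inr
  | parallel t₁ t₂ =>
      (t₁.paths.image fun P => P.image Sum.inl) ∪ (t₂.paths.image fun P => P.image Sum.inr)

/-- A series-parallel graph is extension-parallel if in every series composition one of
the two parts is a single arc. -/
def IsEP : SPTree → Prop
  | edge => True
  | series t₁ t₂ => (t₁ = edge ∧ t₂.IsEP) ∨ (t₂ = edge ∧ t₁.IsEP)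
  | parallel t₁ t₂ => t₁.IsEP ∧ t₂.IsEP

end SPTree

/-- The symmetric network congestion game with `n` players on an extension-parallel
graph `t` with delay functions `d`. -/
def SNCGep (t : EPTree) (d : t.Arc → ℕ → ℝ) (n : ℕ) : CGame t.Arc n where
  actions := fun _ => t.paths
  delay := d

/-- The symmetric network congestion game with `n` players on a series-parallel
graph `t` with delay functions `d`. -/
def SNCGsp (t : SPTree) (d : t.Arc → ℕ → ℝ) (n : ℕ) : CGame t.Arc n where
  actions := fun _ => t.paths
  delay := d


namespace EPProof
set_option linter.unusedSectionVars false
variable {R : Type} [DecidableEq R] [Fintype R]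

set_option linter.unusedSectionVars false

variable {R : Type} [DecidableEq R] [Fintype R]

/-- Number of paths in the config `z` that use resource `r`. -/
def load (z : Multiset (Finset R)) (r : R) : ℕ :=
  (z.map fun P => if r ∈ P then 1 else 0).sum

/-- Potential of a config `z` w.r.t. delays `D` (using `D r 1 + ... + D r (load z r)`). -/
def pot (D : R → ℕ → ℝ) (z : Multiset (Finset R)) : ℝ :=
  ∑ r : R, ∑ i ∈ Finset.range (load z r), D r (i + 1)

@[simp] lemma load_zero (r : R) : load (0 : Multiset (Finset R)) r = 0 := rfl

@[simp] lemma load_cons (p : Finset R) (z : Multiset (Finset R)) (r : R) :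
    load (p ::ₘ z) r = load z r + (if r ∈ p then 1 else 0) := by
  simp [load, Multiset.map_cons, Multiset.sum_cons, Nat.add_comm]

lemma load_add (z w : Multiset (Finset R)) (r : R) :
    load (z + w) r = load z r + load w r := by
  simp [load]

lemma load_erase (p : Finset R) (z : Multiset (Finset R)) (hp : p ∈ z) (r : R) :
    load (z.erase p) r + (if r ∈ p then 1 else 0) = load z r := by
  conv_rhs => rw [← Multiset.cons_erase hp]
  rw [load_cons]

@[simp] lemma pot_zero (D : R → ℕ → ℝ) : pot D (0 : Multiset (Finset R)) = 0 := by
  simp [pot]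

lemma pot_cons (D : R → ℕ → ℝ) (p : Finset R) (z : Multiset (Finset R)) :
    pot D (p ::ₘ z) = pot D z + ∑ r ∈ p, D r (load z r + 1) := by
  have : ∀ r : R, ∑ i ∈ Finset.range (load (p ::ₘ z) r), D r (i + 1)
      = (∑ i ∈ Finset.range (load z r), D r (i + 1)) + (if r ∈ p then D r (load z r + 1) else 0) := by
    intro r
    by_cases h : r ∈ p <;> simp [h, Finset.sum_range_succ]
  rw [pot, Finset.sum_congr rfl (fun r _ => this r), Finset.sum_add_distrib]
  congr 1
  rw [Finset.sum_ite_mem, Finset.univ_inter]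

/-- Realized cost of one player on path `p` in config `z`. -/
def pcost (D : R → ℕ → ℝ) (z : Multiset (Finset R)) (p : Finset R) : ℝ :=
  ∑ r ∈ p, D r (load z r)

lemma pcost_cons_self (D : R → ℕ → ℝ) (z : Multiset (Finset R)) (p : Finset R) :
    pcost D (p ::ₘ z) p = ∑ r ∈ p, D r (load z r + 1) := by
  apply Finset.sum_congr rfl
  intro r hr
  rw [load_cons, if_pos hr]

lemma pot_cons' (D : R → ℕ → ℝ) (p : Finset R) (z : Multiset (Finset R)) :
    pot D (p ::ₘ z) = pot D z + pcost D (p ::ₘ z) p := by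
  rw [pot_cons, pcost_cons_self]

lemma pcost_eq_pot_sub (D : R → ℕ → ℝ) (z : Multiset (Finset R)) (p : Finset R) (hp : p ∈ z) :
    pcost D z p = pot D z - pot D (z.erase p) := by
  have h := pot_cons' D p (z.erase p)
  rw [Multiset.cons_erase hp] at h
  rw [h]
  have h2 : (p ::ₘ z.erase p).erase p = z.erase p := Multiset.erase_cons_head p _
  rw [Multiset.cons_erase hp] at h2
  rw [h2]; ring


section lift

variable {A B : Type} [DecidableEq A] [Fintype A] [DecidableEq B] [Fintype B]

/-- `insert e (P.image g)`: the path-transport map for series extensions. -/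
def Fmap (g : A → B) (e : B) (P : Finset A) : Finset B := insert e (P.image g)

lemma Fmap_inj {g : A → B} (hg : Function.Injective g) {e : B} (he : e ∉ Set.range g) :
    Function.Injective (Fmap g e) := by
  intro P Q h
  have h' : (Fmap g e P).erase e = (Fmap g e Q).erase e := by rw [h]
  have hP : ∀ P : Finset A, (Fmap g e P).erase e = P.image g := by
    intro P
    rw [Fmap, Finset.erase_insert]
    intro hmem
    rcases Finset.mem_image.1 hmem with ⟨a, _, ha⟩
    exact he ⟨a, ha⟩
  rw [hP, hP] at h'
  exact Finset.image_injective hg h'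

lemma load_map_Fmap_e {g : A → B} {e : B} (z : Multiset (Finset A)) :
    load (z.map (Fmap g e)) e = Multiset.card z := by
  simp only [load, Multiset.map_map, Function.comp]
  have : ∀ P : Finset A, (if e ∈ Fmap g e P then 1 else 0) = 1 := by
    intro P; simp [Fmap]
  rw [Multiset.map_congr rfl (fun P _ => this P)]
  simp

lemma load_map_Fmap_g {g : A → B} (hg : Function.Injective g) {e : B} (he : e ∉ Set.range g)
    (z : Multiset (Finset A)) (a : A) :
    load (z.map (Fmap g e)) (g a) = load z a := by
  simp only [load, Multiset.map_map, Function.comp]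
  congr 1
  apply Multiset.map_congr rfl
  intro P _
  have : g a ∈ Fmap g e P ↔ a ∈ P := by
    simp only [Fmap, Finset.mem_insert, Finset.mem_image]
    constructor
    · rintro (h | ⟨b, hb, hba⟩)
      · exact absurd h.symm (fun h => he ⟨a, h.symm⟩)
      · rwa [← hg hba]
    · intro h; exact Or.inr ⟨a, h, rfl⟩
  simp [this]

lemma pot_map_Fmap {g : A → B} (hg : Function.Injective g) {e : B} (he : e ∉ Set.range g)
    (hcover : ∀ b : B, b = e ∨ b ∈ Set.range g)
    (D : B → ℕ → ℝ) (z : Multiset (Finset A)) :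
    pot D (z.map (Fmap g e)) =
      (∑ i ∈ Finset.range (Multiset.card z), D e (i + 1)) + pot (fun a i => D (g a) i) z := by
  have huniv : (Finset.univ : Finset B) = insert e (Finset.univ.image g) := by
    ext b
    simp only [Finset.mem_univ, true_iff, Finset.mem_insert, Finset.mem_image]
    rcases hcover b with h | ⟨a, ha⟩
    · exact Or.inl h
    · exact Or.inr ⟨a, trivial, ha⟩
  have hni : e ∉ Finset.univ.image g := by
    intro h
    rcases Finset.mem_image.1 h with ⟨a, _, ha⟩
    exact he ⟨a, ha⟩
  rw [pot, huniv, Finset.sum_insert hni, Finset.sum_image (fun a _ b _ h => hg h)]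
  rw [load_map_Fmap_e]
  congr 1
  apply Finset.sum_congr rfl
  intro a _
  rw [load_map_Fmap_g hg he]

variable {A₁ A₂ : Type} [DecidableEq A₁] [Fintype A₁] [DecidableEq A₂] [Fintype A₂]

lemma load_map_pair_left {g₁ : A₁ → B} (hg₁ : Function.Injective g₁) {g₂ : A₂ → B}
    (hdisj : ∀ a b, g₁ a ≠ g₂ b)
    (z₁ : Multiset (Finset A₁)) (z₂ : Multiset (Finset A₂)) (a : A₁) :
    load (z₁.map (Finset.image g₁) + z₂.map (Finset.image g₂)) (g₁ a) = load z₁ a := by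
  rw [load, Multiset.map_add, Multiset.sum_add]
  have h1 : (z₁.map (Finset.image g₁)).map (fun P => if g₁ a ∈ P then 1 else 0)
      = z₁.map (fun P => if a ∈ P then 1 else 0) := by
    rw [Multiset.map_map]
    apply Multiset.map_congr rfl
    intro P _
    simp only [Function.comp]
    congr 1
    simp only [eq_iff_iff, Finset.mem_image]
    constructor
    · rintro ⟨b, hb, hba⟩; rwa [← hg₁ hba]
    · intro h; exact ⟨a, h, rfl⟩
  have h2 : (z₂.map (Finset.image g₂)).map (fun P => if g₁ a ∈ P then 1 else 0)
      = z₂.map (fun _ => 0) := by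
    rw [Multiset.map_map]
    apply Multiset.map_congr rfl
    intro P _
    simp only [Function.comp]
    rw [if_neg]
    intro h
    rcases Finset.mem_image.1 h with ⟨b, _, hb⟩
    exact hdisj a b hb.symm
  rw [h1, h2]
  simp [load]

lemma pot_map_pair {g₁ : A₁ → B} (hg₁ : Function.Injective g₁) {g₂ : A₂ → B}
    (hg₂ : Function.Injective g₂) (hdisj : ∀ a b, g₁ a ≠ g₂ b)
    (hcover : ∀ b : B, b ∈ Set.range g₁ ∨ b ∈ Set.range g₂)
    (D : B → ℕ → ℝ) (z₁ : Multiset (Finset A₁)) (z₂ : Multiset (Finset A₂)) :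
    pot D (z₁.map (Finset.image g₁) + z₂.map (Finset.image g₂)) =
      pot (fun a i => D (g₁ a) i) z₁ + pot (fun a i => D (g₂ a) i) z₂ := by
  have huniv : (Finset.univ : Finset B) = Finset.univ.image g₁ ∪ Finset.univ.image g₂ := by
    ext b
    simp only [Finset.mem_univ, true_iff, Finset.mem_union, Finset.mem_image]
    rcases hcover b with ⟨a, ha⟩ | ⟨a, ha⟩
    · exact Or.inl ⟨a, trivial, ha⟩
    · exact Or.inr ⟨a, trivial, ha⟩
  have hdisj' : Disjoint (Finset.univ.image g₁) (Finset.univ.image g₂) := by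
    rw [Finset.disjoint_left]
    intro b h1 h2
    rcases Finset.mem_image.1 h1 with ⟨a, _, ha⟩
    rcases Finset.mem_image.1 h2 with ⟨c, _, hc⟩
    exact hdisj a c (ha.trans hc.symm)
  rw [pot, huniv, Finset.sum_union hdisj', Finset.sum_image (fun a _ b _ h => hg₁ h),
    Finset.sum_image (fun a _ b _ h => hg₂ h)]
  congr 1
  · apply Finset.sum_congr rfl
    intro a _
    rw [load_map_pair_left hg₁ hdisj]
  · apply Finset.sum_congr rfl
    intro a _
    have : z₁.map (Finset.image g₁) + z₂.map (Finset.image g₂)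
        = z₂.map (Finset.image g₂) + z₁.map (Finset.image g₁) := add_comm _ _
    rw [this, load_map_pair_left hg₂ (fun a b => (hdisj b a).symm)]

end lift


section trees

lemma transfer_le_iff (D : R → ℕ → ℝ) {z z' : Multiset (Finset R)} {p : Finset R}
    (hp : p ∈ z) :
    (pot D (z.erase p) + pot D (p ::ₘ z') ≤ pot D z + pot D z')
      ↔ pcost D (p ::ₘ z') p ≤ pcost D z p := by
  have h1 : pcost D z p = pot D z - pot D (z.erase p) := pcost_eq_pot_sub D z p hp
  have h2 : pot D (p ::ₘ z') = pot D z' + pcost D (p ::ₘ z') p := pot_cons' D p z'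
  constructor <;> intro h <;> linarith

lemma Cstep (f : ℕ → ℝ) (hf : Monotone f) {m n : ℕ} (h : m < n) :
    ((∑ i ∈ Finset.range (n - 1), f (i + 1)) + ∑ i ∈ Finset.range (m + 1), f (i + 1))
      ≤ (∑ i ∈ Finset.range n, f (i + 1)) + ∑ i ∈ Finset.range m, f (i + 1) := by
  obtain ⟨k, rfl⟩ : ∃ k, n = k + 1 := ⟨n - 1, by omega⟩
  simp only [Nat.add_sub_cancel, Finset.sum_range_succ]
  have : f (m + 1) ≤ f (k + 1) := hf (by omega)
  linarith

lemma decomp_map {A B : Type} [DecidableEq A] [DecidableEq B]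
    (f : Finset A → Finset B) (S : Finset (Finset A)) (z : Multiset (Finset B))
    (hz : ∀ P ∈ z, P ∈ S.image f) :
    ∃ w : Multiset (Finset A), (∀ P ∈ w, P ∈ S) ∧ z = w.map f := by
  induction z using Multiset.induction with
  | empty => exact ⟨0, by simp, rfl⟩
  | cons Q z ih =>
    obtain ⟨w, hw, rfl⟩ := ih fun P hP => hz P (Multiset.mem_cons_of_mem hP)
    obtain ⟨P, hP, rfl⟩ := Finset.mem_image.1 (hz Q (Multiset.mem_cons_self Q _))
    exact ⟨P ::ₘ w, fun P' hP' => by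
      rcases Multiset.mem_cons.1 hP' with h | h
      · exact h ▸ hP
      · exact hw P' h, by rw [Multiset.map_cons]⟩

lemma decomp_pair {A₁ A₂ B : Type} [DecidableEq A₁] [DecidableEq A₂] [DecidableEq B]
    (f₁ : Finset A₁ → Finset B) (f₂ : Finset A₂ → Finset B)
    (S₁ : Finset (Finset A₁)) (S₂ : Finset (Finset A₂)) (z : Multiset (Finset B))
    (hz : ∀ P ∈ z, P ∈ S₁.image f₁ ∪ S₂.image f₂) :
    ∃ (w₁ : Multiset (Finset A₁)) (w₂ : Multiset (Finset A₂)),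
      (∀ P ∈ w₁, P ∈ S₁) ∧ (∀ P ∈ w₂, P ∈ S₂) ∧ z = w₁.map f₁ + w₂.map f₂ := by
  induction z using Multiset.induction with
  | empty => exact ⟨0, 0, by simp, by simp, rfl⟩
  | cons Q z ih =>
    obtain ⟨w₁, w₂, hw₁, hw₂, rfl⟩ := ih fun P hP => hz P (Multiset.mem_cons_of_mem hP)
    rcases Finset.mem_union.1 (hz Q (Multiset.mem_cons_self Q _)) with h | h
    · obtain ⟨P, hP, rfl⟩ := Finset.mem_image.1 h
      refine ⟨P ::ₘ w₁, w₂, fun P' hP' => ?_, hw₂, ?_⟩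
      · rcases Multiset.mem_cons.1 hP' with h | h
        · exact h ▸ hP
        · exact hw₁ P' h
      · rw [Multiset.map_cons, Multiset.cons_add]
    · obtain ⟨P, hP, rfl⟩ := Finset.mem_image.1 h
      refine ⟨w₁, P ::ₘ w₂, hw₁, fun P' hP' => ?_, ?_⟩
      · rcases Multiset.mem_cons.1 hP' with h | h
        · exact h ▸ hP
        · exact hw₂ P' h
      · rw [Multiset.map_cons, Multiset.add_cons]

end trees

namespace Trees

open EPTree

lemma paths_nonempty : ∀ t : EPTree, t.paths.Nonempty
  | EPTree.edge => ⟨Finset.univ, Finset.mem_singleton_self _⟩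
  | EPTree.parallel t₁ t₂ => by
      obtain ⟨P, hP⟩ := paths_nonempty t₁
      exact ⟨P.image Sum.inl, Finset.mem_union_left _ (Finset.mem_image_of_mem _ hP)⟩
  | EPTree.extHead t => by
      obtain ⟨P, hP⟩ := paths_nonempty t
      exact ⟨_, Finset.mem_image_of_mem _ hP⟩
  | EPTree.extTail t => by
      obtain ⟨P, hP⟩ := paths_nonempty t
      exact ⟨_, Finset.mem_image_of_mem _ hP⟩

lemma nonempty_of_mem_paths : ∀ (t : EPTree) (P : Finset t.Arc), P ∈ t.paths → P.Nonempty
  | EPTree.edge, P, hP => by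
      simp only [EPTree.paths, Finset.mem_singleton] at hP
      obtain rfl := Finset.mem_singleton.1 hP
      exact ⟨(), Finset.mem_univ _⟩
  | EPTree.parallel t₁ t₂, P, hP => by
      rcases Finset.mem_union.1 hP with h | h
      · obtain ⟨Q, hQ, rfl⟩ := Finset.mem_image.1 h
        obtain ⟨a, ha⟩ := nonempty_of_mem_paths t₁ Q hQ
        exact ⟨Sum.inl a, Finset.mem_image_of_mem _ ha⟩
      · obtain ⟨Q, hQ, rfl⟩ := Finset.mem_image.1 h
        obtain ⟨a, ha⟩ := nonempty_of_mem_paths t₂ Q hQ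
        exact ⟨Sum.inr a, Finset.mem_image_of_mem _ ha⟩
  | EPTree.extHead t, P, hP => by
      obtain ⟨Q, _, rfl⟩ := Finset.mem_image.1 hP
      exact ⟨Sum.inl (), Finset.mem_insert_self _ _⟩
  | EPTree.extTail t, P, hP => by
      obtain ⟨Q, _, rfl⟩ := Finset.mem_image.1 hP
      exact ⟨Sum.inr (), Finset.mem_insert_self _ _⟩

end Trees

namespace Trees

lemma count_map_image_ne {A₁ A₂ B : Type} [DecidableEq A₁] [DecidableEq A₂] [DecidableEq B]
    {g₁ : A₁ → B} {g₂ : A₂ → B} (hdisj : ∀ a b, g₁ a ≠ g₂ b)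
    (w₂ : Multiset (Finset A₂)) (hne : ∀ Q ∈ w₂, Q.Nonempty) (p : Finset A₁) :
    (w₂.map (Finset.image g₂)).count (p.image g₁) = 0 := by
  apply Multiset.count_eq_zero_of_notMem
  intro h
  obtain ⟨Q, hQ, hQe⟩ := Multiset.mem_map.1 h
  obtain ⟨x, hx⟩ := hne Q hQ
  have : g₂ x ∈ p.image g₁ := hQe ▸ Finset.mem_image_of_mem _ hx
  obtain ⟨y, _, hy⟩ := Finset.mem_image.1 this
  exact hdisj y x hy

lemma inl_notin_range_inr {α β : Type} (a : α) : Sum.inl a ∉ Set.range (Sum.inr : β → α ⊕ β) := by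
  rintro ⟨b, hb⟩; exact nomatch hb

lemma inr_notin_range_inl {α β : Type} (b : β) : Sum.inr b ∉ Set.range (Sum.inl : α → α ⊕ β) := by
  rintro ⟨a, ha⟩; exact nomatch ha

lemma cover_inr {β : Type} : ∀ b : Unit ⊕ β, b = Sum.inl () ∨ b ∈ Set.range (Sum.inr : β → Unit ⊕ β)
  | Sum.inl () => Or.inl rfl
  | Sum.inr x => Or.inr ⟨x, rfl⟩

lemma cover_inl {β : Type} : ∀ b : β ⊕ Unit, b = Sum.inr () ∨ b ∈ Set.range (Sum.inl : β → β ⊕ Unit)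
  | Sum.inr () => Or.inl rfl
  | Sum.inl x => Or.inr ⟨x, rfl⟩

lemma cover_pair {α β : Type} : ∀ b : α ⊕ β,
    b ∈ Set.range (Sum.inl : α → α ⊕ β) ∨ b ∈ Set.range (Sum.inr : β → α ⊕ β)
  | Sum.inl x => Or.inl ⟨x, rfl⟩
  | Sum.inr x => Or.inr ⟨x, rfl⟩

/-- The "transfer" property of a path system. -/
def TRprop {A : Type} [DecidableEq A] [Fintype A] (S : Finset (Finset A)) : Prop :=
  ∀ D : A → ℕ → ℝ, (∀ r, Monotone (D r)) →
    ∀ z z' : Multiset (Finset A), (∀ P ∈ z, P ∈ S) → (∀ P ∈ z', P ∈ S) →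
    Multiset.card z' < Multiset.card z →
    ∃ p, z'.count p < z.count p ∧
      pot D (z.erase p) + pot D (p ::ₘ z') ≤ pot D z + pot D z'

lemma TRprop_edge : TRprop (EPTree.edge.paths) := by
  intro D hD z z' hz hz' hcard
  have hz1 : ∀ P ∈ z, P = (Finset.univ : Finset EPTree.edge.Arc) := fun P hP => by
    have := hz P hP; simp only [EPTree.paths] at this; exact Finset.mem_singleton.1 this
  have hz'1 : ∀ P ∈ z', P = (Finset.univ : Finset EPTree.edge.Arc) := fun P hP => by
    have := hz' P hP; simp only [EPTree.paths] at this; exact Finset.mem_singleton.1 this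
  have hzne : z ≠ 0 := by
    intro h; rw [h] at hcard; simp at hcard
  obtain ⟨P₀, hP₀⟩ := Multiset.exists_mem_of_ne_zero hzne
  have hp : (Finset.univ : Finset EPTree.edge.Arc) ∈ z := (hz1 P₀ hP₀) ▸ hP₀
  refine ⟨Finset.univ, ?_, ?_⟩
  · have h1 : z.count Finset.univ = Multiset.card z := Multiset.count_eq_card.2
      (fun x hx => (hz1 x hx).symm)
    have h2 : z'.count Finset.univ ≤ Multiset.card z' := Multiset.count_le_card _ _
    omega
  · rw [transfer_le_iff D hp]
    have hload : ∀ (y : Multiset (Finset EPTree.edge.Arc)),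
        (∀ P ∈ y, P = (Finset.univ : Finset EPTree.edge.Arc)) →
        ∀ r, load y r = Multiset.card y := by
      intro y hy r
      rw [load]
      have : (y.map fun P => if r ∈ P then 1 else 0) = y.map fun _ => 1 :=
        Multiset.map_congr rfl (fun P hP => by rw [hy P hP]; simp)
      rw [this]; simp
    rw [pcost, pcost]
    apply Finset.sum_le_sum
    intro r _
    apply hD r
    rw [hload _ hz1 r, load_cons, hload _ hz'1 r]
    split <;> omega

lemma TRprop_ext {A B : Type} [DecidableEq A] [Fintype A] [DecidableEq B] [Fintype B]
    {g : A → B} (hg : Function.Injective g) {e : B} (he : e ∉ Set.range g)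
    (hcover : ∀ b : B, b = e ∨ b ∈ Set.range g)
    {S : Finset (Finset A)} (hS : TRprop S) :
    TRprop (S.image (Fmap g e)) := by
  intro D hD z z' hz hz' hcard
  obtain ⟨w, hw, rfl⟩ := decomp_map (Fmap g e) S z hz
  obtain ⟨w', hw', rfl⟩ := decomp_map (Fmap g e) S z' hz'
  rw [Multiset.card_map, Multiset.card_map] at hcard
  obtain ⟨p, hc, hineq⟩ := hS (fun a i => D (g a) i) (fun a => hD (g a)) w w' hw hw' hcard
  have hpw : p ∈ w := Multiset.count_pos.1 (by omega)
  have hFinj := Fmap_inj hg he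
  refine ⟨Fmap g e p, ?_, ?_⟩
  · rw [Multiset.count_map_eq_count' _ _ hFinj, Multiset.count_map_eq_count' _ _ hFinj]
    exact hc
  · rw [← Multiset.map_erase _ hFinj, ← Multiset.map_cons,
      pot_map_Fmap hg he hcover, pot_map_Fmap hg he hcover,
      pot_map_Fmap hg he hcover, pot_map_Fmap hg he hcover]
    have hce : Multiset.card (w.erase p) = Multiset.card w - 1 := by
      rw [Multiset.card_erase_of_mem hpw]; rfl
    have hcc : Multiset.card (p ::ₘ w') = Multiset.card w' + 1 := by
      rw [Multiset.card_cons]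
    rw [hce, hcc]
    have := Cstep (fun i => D e i) (hD e) hcard
    linarith

lemma TRprop_pair_core {A₁ A₂ B : Type} [DecidableEq A₁] [Fintype A₁]
    [DecidableEq A₂] [Fintype A₂] [DecidableEq B] [Fintype B]
    {g₁ : A₁ → B} (hg₁ : Function.Injective g₁) {g₂ : A₂ → B} (hg₂ : Function.Injective g₂)
    (hdisj : ∀ a b, g₁ a ≠ g₂ b)
    (hcover : ∀ b : B, b ∈ Set.range g₁ ∨ b ∈ Set.range g₂)
    {S₁ : Finset (Finset A₁)} (hS₁ : TRprop S₁)
    (D : B → ℕ → ℝ) (hD : ∀ r, Monotone (D r))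
    (w₁ w₁' : Multiset (Finset A₁)) (w₂ w₂' : Multiset (Finset A₂))
    (hw₁ : ∀ P ∈ w₁, P ∈ S₁) (hw₁' : ∀ P ∈ w₁', P ∈ S₁)
    (hne₂ : ∀ Q ∈ w₂', Q.Nonempty)
    (hcard : Multiset.card w₁' < Multiset.card w₁) :
    ∃ p, (w₁'.map (Finset.image g₁) + w₂'.map (Finset.image g₂)).count p
        < (w₁.map (Finset.image g₁) + w₂.map (Finset.image g₂)).count p ∧
      pot D ((w₁.map (Finset.image g₁) + w₂.map (Finset.image g₂)).erase p)
        + pot D (p ::ₘ (w₁'.map (Finset.image g₁) + w₂'.map (Finset.image g₂)))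
      ≤ pot D (w₁.map (Finset.image g₁) + w₂.map (Finset.image g₂))
        + pot D (w₁'.map (Finset.image g₁) + w₂'.map (Finset.image g₂)) := by
  obtain ⟨p, hc, hineq⟩ := hS₁ (fun a i => D (g₁ a) i) (fun a => hD (g₁ a)) w₁ w₁' hw₁ hw₁' hcard
  have hpw : p ∈ w₁ := Multiset.count_pos.1 (by omega)
  have himg := Finset.image_injective hg₁
  refine ⟨p.image g₁, ?_, ?_⟩
  · rw [Multiset.count_add, Multiset.count_add,
      Multiset.count_map_eq_count' _ _ himg, Multiset.count_map_eq_count' _ _ himg,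
      count_map_image_ne hdisj w₂' hne₂]
    have : (w₂.map (Finset.image g₂)).count (p.image g₁) ≥ 0 := Nat.zero_le _
    omega
  · have herase : (w₁.map (Finset.image g₁) + w₂.map (Finset.image g₂)).erase (p.image g₁)
        = (w₁.erase p).map (Finset.image g₁) + w₂.map (Finset.image g₂) := by
      conv_lhs => rw [show w₁ = p ::ₘ w₁.erase p from (Multiset.cons_erase hpw).symm]
      rw [Multiset.map_cons, Multiset.cons_add, Multiset.erase_cons_head]
    have hcons : p.image g₁ ::ₘ (w₁'.map (Finset.image g₁) + w₂'.map (Finset.image g₂))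
        = (p ::ₘ w₁').map (Finset.image g₁) + w₂'.map (Finset.image g₂) := by
      rw [Multiset.map_cons, Multiset.cons_add]
    rw [herase, hcons, pot_map_pair hg₁ hg₂ hdisj hcover, pot_map_pair hg₁ hg₂ hdisj hcover,
      pot_map_pair hg₁ hg₂ hdisj hcover, pot_map_pair hg₁ hg₂ hdisj hcover]
    linarith

theorem TRpaths : ∀ t : EPTree, TRprop t.paths := by
  intro t
  induction t with
  | edge => exact TRprop_edge
  | parallel t₁ t₂ ih₁ ih₂ =>
    intro D hD z z' hz hz' hcard
    obtain ⟨w₁, w₂, hw₁, hw₂, rfl⟩ := decomp_pair _ _ _ _ z hz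
    obtain ⟨w₁', w₂', hw₁', hw₂', rfl⟩ := decomp_pair _ _ _ _ z' hz'
    rw [Multiset.card_add, Multiset.card_add, Multiset.card_map, Multiset.card_map,
      Multiset.card_map, Multiset.card_map] at hcard
    rcases lt_or_ge (Multiset.card w₁') (Multiset.card w₁) with h | h
    · exact TRprop_pair_core Sum.inl_injective Sum.inr_injective
        (fun a b h => nomatch h) cover_pair ih₁ D hD w₁ w₁' w₂ w₂' hw₁ hw₁'
        (fun Q hQ => Trees.nonempty_of_mem_paths t₂ Q (hw₂' Q hQ)) h
    · have h2 : Multiset.card w₂' < Multiset.card w₂ := by omega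
      have hcomm : ∀ (a : Multiset (Finset t₁.Arc)) (b : Multiset (Finset t₂.Arc)),
          a.map (Finset.image Sum.inl) + b.map (Finset.image Sum.inr)
          = b.map (Finset.image (Sum.inr : t₂.Arc → t₁.Arc ⊕ t₂.Arc))
            + a.map (Finset.image Sum.inl) := fun a b => add_comm _ _
      erw [hcomm w₁ w₂, hcomm w₁' w₂']
      exact TRprop_pair_core Sum.inr_injective Sum.inl_injective
        (fun a b h => nomatch h) (fun b => (cover_pair b).symm) ih₂ D hD w₂ w₂' w₁ w₁'
        hw₂ hw₂' (fun Q hQ => Trees.nonempty_of_mem_paths t₁ Q (hw₁' Q hQ)) h2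
  | extHead t ih =>
    exact TRprop_ext Sum.inr_injective (inl_notin_range_inr ()) cover_inr ih
  | extTail t ih =>
    exact TRprop_ext Sum.inl_injective (inr_notin_range_inl ()) cover_inl ih


/-- The "exchange" property of a path system. -/
def EXSprop {A : Type} [DecidableEq A] [Fintype A] (S : Finset (Finset A)) : Prop :=
  ∀ D : A → ℕ → ℝ, (∀ r, Monotone (D r)) →
    ∀ z z' : Multiset (Finset A), (∀ P ∈ z, P ∈ S) → (∀ P ∈ z', P ∈ S) →
    ∀ p, z'.count p < z.count p →
    (Multiset.card z' < Multiset.card z ∧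
      pot D (z.erase p) + pot D (p ::ₘ z') ≤ pot D z + pot D z') ∨
    (∃ q, z.count q < z'.count q ∧
      pot D (q ::ₘ z.erase p) + pot D (p ::ₘ z'.erase q) ≤ pot D z + pot D z')

lemma EXSprop_edge : EXSprop (EPTree.edge.paths) := by
  intro D hD z z' hz hz' p hcp
  have hp : p ∈ z := Multiset.count_pos.1 (by omega)
  have hz1 : ∀ P ∈ z, P = (Finset.univ : Finset EPTree.edge.Arc) := fun P hP => by
    have := hz P hP; simp only [EPTree.paths] at this; exact Finset.mem_singleton.1 this
  have hz'1 : ∀ P ∈ z', P = (Finset.univ : Finset EPTree.edge.Arc) := fun P hP => by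
    have := hz' P hP; simp only [EPTree.paths] at this; exact Finset.mem_singleton.1 this
  have hpu : p = Finset.univ := hz1 p hp
  subst hpu
  have h1 : z.count Finset.univ = Multiset.card z := Multiset.count_eq_card.2
    (fun x hx => (hz1 x hx).symm)
  have h1' : z'.count Finset.univ = Multiset.card z' := Multiset.count_eq_card.2
    (fun x hx => (hz'1 x hx).symm)
  have hcard : Multiset.card z' < Multiset.card z := by omega
  refine Or.inl ⟨hcard, ?_⟩
  rw [transfer_le_iff D hp]
  have hload : ∀ (y : Multiset (Finset EPTree.edge.Arc)),
      (∀ P ∈ y, P = (Finset.univ : Finset EPTree.edge.Arc)) →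
      ∀ r, load y r = Multiset.card y := by
    intro y hy r
    rw [load]
    have : (y.map fun P => if r ∈ P then 1 else 0) = y.map fun _ => 1 :=
      Multiset.map_congr rfl (fun P hP => by rw [hy P hP]; simp)
    rw [this]; simp
  rw [pcost, pcost]
  apply Finset.sum_le_sum
  intro r _
  apply hD r
  rw [hload _ hz1 r, load_cons, hload _ hz'1 r]
  split <;> omega

lemma EXSprop_ext {A B : Type} [DecidableEq A] [Fintype A] [DecidableEq B] [Fintype B]
    {g : A → B} (hg : Function.Injective g) {e : B} (he : e ∉ Set.range g)
    (hcover : ∀ b : B, b = e ∨ b ∈ Set.range g)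
    {S : Finset (Finset A)} (hS : EXSprop S) :
    EXSprop (S.image (Fmap g e)) := by
  intro D hD z z' hz hz' p hcp
  obtain ⟨w, hw, rfl⟩ := decomp_map (Fmap g e) S z hz
  obtain ⟨w', hw', rfl⟩ := decomp_map (Fmap g e) S z' hz'
  have hFinj := Fmap_inj hg he
  have hp : p ∈ w.map (Fmap g e) := Multiset.count_pos.1 (by omega)
  obtain ⟨p₀, hp₀, rfl⟩ := Multiset.mem_map.1 hp
  rw [Multiset.count_map_eq_count' _ _ hFinj, Multiset.count_map_eq_count' _ _ hFinj] at hcp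
  have hpw : p₀ ∈ w := Multiset.count_pos.1 (by omega)
  have hwpos : 0 < Multiset.card w := Multiset.card_pos_iff_exists_mem.2 ⟨p₀, hpw⟩
  rcases hS (fun a i => D (g a) i) (fun a => hD (g a)) w w' hw hw' p₀ hcp with
    ⟨hcard, hineq⟩ | ⟨q₀, hcq, hineq⟩
  · left
    constructor
    · rw [Multiset.card_map, Multiset.card_map]; exact hcard
    · rw [← Multiset.map_erase _ hFinj, ← Multiset.map_cons,
        pot_map_Fmap hg he hcover, pot_map_Fmap hg he hcover,
        pot_map_Fmap hg he hcover, pot_map_Fmap hg he hcover]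
      have hce : Multiset.card (w.erase p₀) = Multiset.card w - 1 := by
        rw [Multiset.card_erase_of_mem hpw]; rfl
      rw [hce, Multiset.card_cons]
      have := Cstep (fun i => D e i) (hD e) hcard
      linarith
  · right
    have hqw' : q₀ ∈ w' := Multiset.count_pos.1 (by omega)
    have hw'pos : 0 < Multiset.card w' := Multiset.card_pos_iff_exists_mem.2 ⟨q₀, hqw'⟩
    refine ⟨Fmap g e q₀, ?_, ?_⟩
    · rw [Multiset.count_map_eq_count' _ _ hFinj, Multiset.count_map_eq_count' _ _ hFinj]
      exact hcq
    · rw [← Multiset.map_erase _ hFinj, ← Multiset.map_erase _ hFinj,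
        ← Multiset.map_cons, ← Multiset.map_cons,
        pot_map_Fmap hg he hcover, pot_map_Fmap hg he hcover,
        pot_map_Fmap hg he hcover, pot_map_Fmap hg he hcover]
      have hce : Multiset.card (q₀ ::ₘ w.erase p₀) = Multiset.card w := by
        rw [Multiset.card_cons, Multiset.card_erase_of_mem hpw]
        exact Nat.succ_pred_eq_of_pos hwpos
      have hce' : Multiset.card (p₀ ::ₘ w'.erase q₀) = Multiset.card w' := by
        rw [Multiset.card_cons, Multiset.card_erase_of_mem hqw']
        exact Nat.succ_pred_eq_of_pos hw'pos
      rw [hce, hce']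
      linarith

lemma erase_add_right {B : Type} [DecidableEq B] (X : Multiset B) {Y : Multiset B} {y : B}
    (hy : y ∈ Y) : (X + Y).erase y = X + Y.erase y := by
  conv_lhs => rw [show Y = y ::ₘ Y.erase y from (Multiset.cons_erase hy).symm]
  rw [Multiset.add_cons, Multiset.erase_cons_head]

lemma erase_add_left {B : Type} [DecidableEq B] {X : Multiset B} (Y : Multiset B) {x : B}
    (hx : x ∈ X) : (X + Y).erase x = X.erase x + Y := by
  conv_lhs => rw [show X = x ::ₘ X.erase x from (Multiset.cons_erase hx).symm]
  rw [Multiset.cons_add, Multiset.erase_cons_head]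

lemma EXSprop_pair_core {A₁ A₂ B : Type} [DecidableEq A₁] [Fintype A₁]
    [DecidableEq A₂] [Fintype A₂] [DecidableEq B] [Fintype B]
    {g₁ : A₁ → B} (hg₁ : Function.Injective g₁) {g₂ : A₂ → B} (hg₂ : Function.Injective g₂)
    (hdisj : ∀ a b, g₁ a ≠ g₂ b)
    (hcover : ∀ b : B, b ∈ Set.range g₁ ∨ b ∈ Set.range g₂)
    {S₁ : Finset (Finset A₁)} (hS₁ : EXSprop S₁)
    {S₂ : Finset (Finset A₂)} (hS₂ : TRprop S₂)
    (hS₁ne : ∀ Q ∈ S₁, Q.Nonempty) (hS₂ne : ∀ Q ∈ S₂, Q.Nonempty)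
    (D : B → ℕ → ℝ) (hD : ∀ r, Monotone (D r))
    (w₁ w₁' : Multiset (Finset A₁)) (w₂ w₂' : Multiset (Finset A₂))
    (hw₁ : ∀ P ∈ w₁, P ∈ S₁) (hw₁' : ∀ P ∈ w₁', P ∈ S₁)
    (hw₂ : ∀ P ∈ w₂, P ∈ S₂) (hw₂' : ∀ P ∈ w₂', P ∈ S₂)
    (p₀ : Finset A₁) (hcp : w₁'.count p₀ < w₁.count p₀) :
    (Multiset.card (w₁'.map (Finset.image g₁) + w₂'.map (Finset.image g₂))
        < Multiset.card (w₁.map (Finset.image g₁) + w₂.map (Finset.image g₂)) ∧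
      pot D ((w₁.map (Finset.image g₁) + w₂.map (Finset.image g₂)).erase (p₀.image g₁))
        + pot D (p₀.image g₁ ::ₘ (w₁'.map (Finset.image g₁) + w₂'.map (Finset.image g₂)))
      ≤ pot D (w₁.map (Finset.image g₁) + w₂.map (Finset.image g₂))
        + pot D (w₁'.map (Finset.image g₁) + w₂'.map (Finset.image g₂))) ∨
    (∃ q, (w₁.map (Finset.image g₁) + w₂.map (Finset.image g₂)).count q
        < (w₁'.map (Finset.image g₁) + w₂'.map (Finset.image g₂)).count q ∧
      pot D (q ::ₘ (w₁.map (Finset.image g₁) + w₂.map (Finset.image g₂)).erase (p₀.image g₁))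
        + pot D (p₀.image g₁ ::ₘ (w₁'.map (Finset.image g₁) + w₂'.map (Finset.image g₂)).erase q)
      ≤ pot D (w₁.map (Finset.image g₁) + w₂.map (Finset.image g₂))
        + pot D (w₁'.map (Finset.image g₁) + w₂'.map (Finset.image g₂))) := by
  have himg := Finset.image_injective hg₁
  have himg2 := Finset.image_injective hg₂
  have hne₁ : ∀ Q ∈ w₁, Q.Nonempty := fun Q hQ => hS₁ne Q (hw₁ Q hQ)
  have hne₁' : ∀ Q ∈ w₁', Q.Nonempty := fun Q hQ => hS₁ne Q (hw₁' Q hQ)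
  have hne₂ : ∀ Q ∈ w₂, Q.Nonempty := fun Q hQ => hS₂ne Q (hw₂ Q hQ)
  have hne₂' : ∀ Q ∈ w₂', Q.Nonempty := fun Q hQ => hS₂ne Q (hw₂' Q hQ)
  have hpw : p₀ ∈ w₁ := Multiset.count_pos.1 (by omega)
  have hdisj' : ∀ a b, g₂ a ≠ g₁ b := fun a b h => hdisj b a h.symm
  have herase : (w₁.map (Finset.image g₁) + w₂.map (Finset.image g₂)).erase (p₀.image g₁)
      = (w₁.erase p₀).map (Finset.image g₁) + w₂.map (Finset.image g₂) := by
    rw [erase_add_left _ (Multiset.mem_map_of_mem _ hpw), Multiset.map_erase _ himg]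
  rcases hS₁ (fun a i => D (g₁ a) i) (fun a => hD (g₁ a)) w₁ w₁' hw₁ hw₁' p₀ hcp with
    ⟨hcard, hineq⟩ | ⟨q₀, hcq, hineq⟩
  · -- transfer within side 1
    rcases lt_or_ge (Multiset.card (w₁'.map (Finset.image g₁) + w₂'.map (Finset.image g₂)))
      (Multiset.card (w₁.map (Finset.image g₁) + w₂.map (Finset.image g₂))) with htot | htot
    · left
      refine ⟨htot, ?_⟩
      have hcons : p₀.image g₁ ::ₘ (w₁'.map (Finset.image g₁) + w₂'.map (Finset.image g₂))
          = (p₀ ::ₘ w₁').map (Finset.image g₁) + w₂'.map (Finset.image g₂) := by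
        rw [Multiset.map_cons, Multiset.cons_add]
      rw [herase, hcons, pot_map_pair hg₁ hg₂ hdisj hcover, pot_map_pair hg₁ hg₂ hdisj hcover,
        pot_map_pair hg₁ hg₂ hdisj hcover, pot_map_pair hg₁ hg₂ hdisj hcover]
      linarith
    · -- side 2 must go the other way
      right
      have hc2 : Multiset.card w₂ < Multiset.card w₂' := by
        simp only [Multiset.card_add, Multiset.card_map] at htot
        omega
      obtain ⟨s₀, hcs, hineq2⟩ := hS₂ (fun a i => D (g₂ a) i) (fun a => hD (g₂ a)) w₂' w₂
        hw₂' hw₂ hc2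
      have hsw' : s₀ ∈ w₂' := Multiset.count_pos.1 (by omega)
      refine ⟨s₀.image g₂, ?_, ?_⟩
      · rw [Multiset.count_add, Multiset.count_add,
          Multiset.count_map_eq_count' _ _ himg2, Multiset.count_map_eq_count' _ _ himg2,
          count_map_image_ne hdisj' w₁ hne₁ s₀, count_map_image_ne hdisj' w₁' hne₁' s₀]
        omega
      · have hL : s₀.image g₂ ::ₘ ((w₁.erase p₀).map (Finset.image g₁) + w₂.map (Finset.image g₂))
            = (w₁.erase p₀).map (Finset.image g₁) + (s₀ ::ₘ w₂).map (Finset.image g₂) := by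
          rw [Multiset.map_cons, Multiset.add_cons]
        have hR : (w₁'.map (Finset.image g₁) + w₂'.map (Finset.image g₂)).erase (s₀.image g₂)
            = w₁'.map (Finset.image g₁) + (w₂'.erase s₀).map (Finset.image g₂) := by
          rw [erase_add_right _ (Multiset.mem_map_of_mem _ hsw'), Multiset.map_erase _ himg2]
        have hR2 : p₀.image g₁ ::ₘ (w₁'.map (Finset.image g₁) + (w₂'.erase s₀).map (Finset.image g₂))
            = (p₀ ::ₘ w₁').map (Finset.image g₁) + (w₂'.erase s₀).map (Finset.image g₂) := by
          rw [Multiset.map_cons, Multiset.cons_add]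
        rw [herase, hL, hR, hR2, pot_map_pair hg₁ hg₂ hdisj hcover,
          pot_map_pair hg₁ hg₂ hdisj hcover, pot_map_pair hg₁ hg₂ hdisj hcover,
          pot_map_pair hg₁ hg₂ hdisj hcover]
        linarith
  · -- swap within side 1
    right
    have hqw' : q₀ ∈ w₁' := Multiset.count_pos.1 (by omega)
    refine ⟨q₀.image g₁, ?_, ?_⟩
    · rw [Multiset.count_add, Multiset.count_add,
        Multiset.count_map_eq_count' _ _ himg, Multiset.count_map_eq_count' _ _ himg,
        count_map_image_ne hdisj w₂ hne₂ q₀, count_map_image_ne hdisj w₂' hne₂' q₀]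
      omega
    · have hL : q₀.image g₁ ::ₘ ((w₁.erase p₀).map (Finset.image g₁) + w₂.map (Finset.image g₂))
          = (q₀ ::ₘ w₁.erase p₀).map (Finset.image g₁) + w₂.map (Finset.image g₂) := by
        rw [Multiset.map_cons, Multiset.cons_add]
      have hR : (w₁'.map (Finset.image g₁) + w₂'.map (Finset.image g₂)).erase (q₀.image g₁)
          = (w₁'.erase q₀).map (Finset.image g₁) + w₂'.map (Finset.image g₂) := by
        rw [erase_add_left _ (Multiset.mem_map_of_mem _ hqw'), Multiset.map_erase _ himg]
      have hR2 : p₀.image g₁ ::ₘ ((w₁'.erase q₀).map (Finset.image g₁) + w₂'.map (Finset.image g₂))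
          = (p₀ ::ₘ w₁'.erase q₀).map (Finset.image g₁) + w₂'.map (Finset.image g₂) := by
        rw [Multiset.map_cons, Multiset.cons_add]
      rw [herase, hL, hR, hR2, pot_map_pair hg₁ hg₂ hdisj hcover,
        pot_map_pair hg₁ hg₂ hdisj hcover, pot_map_pair hg₁ hg₂ hdisj hcover,
        pot_map_pair hg₁ hg₂ hdisj hcover]
      linarith

theorem EXSpaths : ∀ t : EPTree, EXSprop t.paths := by
  intro t
  induction t with
  | edge => exact EXSprop_edge
  | parallel t₁ t₂ ih₁ ih₂ =>
    intro D hD z z' hz hz' p hcp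
    obtain ⟨w₁, w₂, hw₁, hw₂, rfl⟩ := decomp_pair _ _ _ _ z hz
    obtain ⟨w₁', w₂', hw₁', hw₂', rfl⟩ := decomp_pair _ _ _ _ z' hz'
    have himg1 := Finset.image_injective (Sum.inl_injective : Function.Injective
      (Sum.inl : t₁.Arc → t₁.Arc ⊕ t₂.Arc))
    have himg2 := Finset.image_injective (Sum.inr_injective : Function.Injective
      (Sum.inr : t₂.Arc → t₁.Arc ⊕ t₂.Arc))
    have hdisj : ∀ (a : t₁.Arc) (b : t₂.Arc),
        (Sum.inl a : t₁.Arc ⊕ t₂.Arc) ≠ Sum.inr b := fun a b h => nomatch h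
    have hdisj' : ∀ (a : t₂.Arc) (b : t₁.Arc),
        (Sum.inr a : t₁.Arc ⊕ t₂.Arc) ≠ Sum.inl b := fun a b h => nomatch h
    have hne₁ : ∀ Q ∈ t₁.paths, Q.Nonempty := fun Q hQ => Trees.nonempty_of_mem_paths t₁ Q hQ
    have hne₂ : ∀ Q ∈ t₂.paths, Q.Nonempty := fun Q hQ => Trees.nonempty_of_mem_paths t₂ Q hQ
    have hp : p ∈ w₁.map (Finset.image Sum.inl) + w₂.map (Finset.image Sum.inr) :=
      Multiset.count_pos.1 (lt_of_le_of_lt (Nat.zero_le _) hcp)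
    rcases Multiset.mem_add.1 hp with hmem | hmem
    · obtain ⟨p₀, hp₀, rfl⟩ := Multiset.mem_map.1 hmem
      erw [Multiset.count_add, Multiset.count_add,
        Multiset.count_map_eq_count' _ _ himg1, Multiset.count_map_eq_count' _ _ himg1,
        count_map_image_ne hdisj w₂ (fun Q hQ => hne₂ Q (hw₂ Q hQ)) p₀,
        count_map_image_ne hdisj w₂' (fun Q hQ => hne₂ Q (hw₂' Q hQ)) p₀] at hcp
      exact EXSprop_pair_core Sum.inl_injective Sum.inr_injective hdisj cover_pair
        ih₁ (TRpaths t₂) hne₁ hne₂ D hD w₁ w₁' w₂ w₂' hw₁ hw₁' hw₂ hw₂' p₀ (by omega)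
    · obtain ⟨p₀, hp₀, rfl⟩ := Multiset.mem_map.1 hmem
      erw [Multiset.count_add, Multiset.count_add,
        Multiset.count_map_eq_count' _ _ himg2, Multiset.count_map_eq_count' _ _ himg2,
        count_map_image_ne hdisj' w₁ (fun Q hQ => hne₁ Q (hw₁ Q hQ)) p₀,
        count_map_image_ne hdisj' w₁' (fun Q hQ => hne₁ Q (hw₁' Q hQ)) p₀] at hcp
      have hcomm : ∀ (a : Multiset (Finset t₁.Arc)) (b : Multiset (Finset t₂.Arc)),
          a.map (Finset.image Sum.inl) + b.map (Finset.image Sum.inr)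
          = b.map (Finset.image (Sum.inr : t₂.Arc → t₁.Arc ⊕ t₂.Arc))
            + a.map (Finset.image Sum.inl) := fun a b => add_comm _ _
      erw [hcomm w₁ w₂, hcomm w₁' w₂']
      exact EXSprop_pair_core Sum.inr_injective Sum.inl_injective hdisj'
        (fun b => (cover_pair b).symm) ih₂ (TRpaths t₁) hne₂ hne₁ D hD w₂ w₂' w₁ w₁'
        hw₂ hw₂' hw₁ hw₁' p₀ (by omega)
  | extHead t ih =>
    exact EXSprop_ext Sum.inr_injective (inl_notin_range_inr ()) cover_inr ih
  | extTail t ih =>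
    exact EXSprop_ext Sum.inl_injective (inr_notin_range_inl ()) cover_inl ih

end Trees

section minimizers

open Trees

variable (S : Finset (Finset R)) (D : R → ℕ → ℝ)

/-- No ties under single-player swaps (consequence of genericity). `N` bounds config size. -/
def Swappable (N : ℕ) : Prop :=
  ∀ z : Multiset (Finset R), (∀ P ∈ z, P ∈ S) → Multiset.card z + 1 ≤ N →
    ∀ p ∈ S, ∀ q ∈ S, p ≠ q → pot D (p ::ₘ z) ≠ pot D (q ::ₘ z)

def IsMin (m : ℕ) (z : Multiset (Finset R)) : Prop :=
  (∀ P ∈ z, P ∈ S) ∧ Multiset.card z = m ∧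
    ∀ y, (∀ P ∈ y, P ∈ S) → Multiset.card y = m → pot D z ≤ pot D y

def IsMinW (m : ℕ) (p : Finset R) (z : Multiset (Finset R)) : Prop :=
  (∀ P ∈ z, P ∈ S) ∧ Multiset.card z = m ∧ p ∈ z ∧
    ∀ y, (∀ P ∈ y, P ∈ S) → Multiset.card y = m → p ∈ y → pot D z ≤ pot D y

/-- The delays after one extra player commits to path `a`. -/
def shiftD (a : Finset R) : R → ℕ → ℝ := fun r y => D r (y + if r ∈ a then 1 else 0)

variable {S D}

lemma shiftD_mono (hD : ∀ r, Monotone (D r)) (a : Finset R) :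
    ∀ r, Monotone (shiftD D a r) := by
  intro r x y hxy
  exact hD r (by omega)

lemma pot_shiftD (a : Finset R) (z : Multiset (Finset R)) :
    pot (shiftD D a) z = pot D (a ::ₘ z) - ∑ r ∈ a, D r 1 := by
  have key : ∀ r : R, ∑ i ∈ Finset.range (load z r), shiftD D a r (i + 1)
      = (∑ i ∈ Finset.range (load (a ::ₘ z) r), D r (i + 1)) - (if r ∈ a then D r 1 else 0) := by
    intro r
    by_cases h : r ∈ a
    · rw [load_cons, if_pos h, if_pos h, Finset.sum_range_succ']
      have : ∀ i, shiftD D a r (i + 1) = D r (i + 1 + 1) := fun i => by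
        rw [shiftD, if_pos h]
      rw [Finset.sum_congr rfl (fun i _ => this i)]
      ring
    · rw [load_cons, if_neg h, if_neg h]
      simp only [Nat.add_zero, sub_zero]
      apply Finset.sum_congr rfl
      intro i _
      rw [shiftD, if_neg h, Nat.add_zero]
  rw [pot, pot, Finset.sum_congr rfl (fun r _ => key r), Finset.sum_sub_distrib,
    Finset.sum_ite_mem, Finset.univ_inter]

lemma exists_isMin (hS : S.Nonempty) (m : ℕ) : ∃ z, IsMin S D m z := by
  classical
  obtain ⟨P, hP⟩ := hS
  have hmem : (Multiset.replicate m P) ∈ (S.sym m).image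
      (fun x : Sym (Finset R) m => (x : Multiset (Finset R))) := by
    refine Finset.mem_image.2 ⟨⟨Multiset.replicate m P, Multiset.card_replicate _ _⟩, ?_, rfl⟩
    refine Finset.mem_sym_iff.2 ?_
    intro a ha
    rwa [Multiset.eq_of_mem_replicate ha]
  obtain ⟨z, hz, hmin⟩ := Finset.exists_min_image _ (pot D) ⟨_, hmem⟩
  refine ⟨z, ?_, ?_, ?_⟩
  · obtain ⟨x, hx, rfl⟩ := Finset.mem_image.1 hz
    exact fun P hP => (Finset.mem_sym_iff.1 hx) P hP
  · obtain ⟨x, hx, rfl⟩ := Finset.mem_image.1 hz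
    exact x.2
  · intro y hy hcard
    refine hmin y (Finset.mem_image.2 ⟨⟨y, hcard⟩, ?_, rfl⟩)
    refine Finset.mem_sym_iff.2 ?_
    exact fun a ha => hy a ha

lemma exists_count_lt {z z' : Multiset (Finset R)} (hne : z ≠ z')
    (hcard : Multiset.card z' ≤ Multiset.card z) :
    ∃ p, z'.count p < z.count p := by
  by_contra h
  push_neg at h
  have hle : z ≤ z' := Multiset.le_iff_count.2 (fun a => h a)
  exact hne (Multiset.eq_of_le_of_card_le hle hcard)

lemma isMin_unique {N m : ℕ} (hEX : EXSprop S) (hD : ∀ r, Monotone (D r))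
    (hsw : Swappable S D N) (hmN : m ≤ N)
    {z z' : Multiset (Finset R)} (h : IsMin S D m z) (h' : IsMin S D m z') : z = z' := by
  by_contra hne
  obtain ⟨hzS, hzc, hzmin⟩ := h
  obtain ⟨hz'S, hz'c, hz'min⟩ := h'
  obtain ⟨p, hcp⟩ := exists_count_lt hne (le_of_eq (hz'c.trans hzc.symm))
  have hpz : p ∈ z := Multiset.count_pos.1 (by omega)
  have hm1 : 1 ≤ m := hzc ▸ Multiset.card_pos_iff_exists_mem.2 ⟨p, hpz⟩
  rcases hEX D hD z z' hzS hz'S p hcp with ⟨hlt, _⟩ | ⟨q, hcq, hineq⟩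
  · rw [hzc, hz'c] at hlt
    exact absurd hlt (lt_irrefl m)
  · have hqz' : q ∈ z' := Multiset.count_pos.1 (by omega)
    have hpq : p ≠ q := by
      intro e; subst e; omega
    have hv1 : ∀ P ∈ q ::ₘ z.erase p, P ∈ S := by
      intro P hP
      rcases Multiset.mem_cons.1 hP with h | h
      · exact h ▸ hz'S q hqz'
      · exact hzS P (Multiset.mem_of_mem_erase h)
    have hc1 : Multiset.card (q ::ₘ z.erase p) = m := by
      rw [Multiset.card_cons, Multiset.card_erase_of_mem hpz, hzc]
      exact Nat.succ_pred_eq_of_pos hm1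
    have hv2 : ∀ P ∈ p ::ₘ z'.erase q, P ∈ S := by
      intro P hP
      rcases Multiset.mem_cons.1 hP with h | h
      · exact h ▸ hzS p hpz
      · exact hz'S P (Multiset.mem_of_mem_erase h)
    have hc2 : Multiset.card (p ::ₘ z'.erase q) = m := by
      rw [Multiset.card_cons, Multiset.card_erase_of_mem hqz', hz'c]
      exact Nat.succ_pred_eq_of_pos hm1
    have h1 := hzmin _ hv1 hc1
    have h2 := hz'min _ hv2 hc2
    have heq : pot D (q ::ₘ z.erase p) = pot D z := le_antisymm (by linarith) h1
    have hvz : ∀ P ∈ z.erase p, P ∈ S := fun P hP => hzS P (Multiset.mem_of_mem_erase hP)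
    have hcz : Multiset.card (z.erase p) + 1 ≤ N := by
      rw [Multiset.card_erase_of_mem hpz, hzc]
      have := Nat.succ_pred_eq_of_pos hm1
      omega
    refine hsw (z.erase p) hvz hcz p (hzS p hpz) q (hz'S q hqz') hpq ?_
    rw [Multiset.cons_erase hpz]
    exact heq.symm

lemma isMinW_unique {N m : ℕ} (hEX : EXSprop S) (hD : ∀ r, Monotone (D r))
    (hsw : Swappable S D N) (hmN : m ≤ N) {a : Finset R}
    {z z' : Multiset (Finset R)} (h : IsMinW S D m a z) (h' : IsMinW S D m a z') : z = z' := by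
  by_contra hne
  obtain ⟨hzS, hzc, haz, hzmin⟩ := h
  obtain ⟨hz'S, hz'c, haz', hz'min⟩ := h'
  obtain ⟨p, hcp⟩ := exists_count_lt hne (le_of_eq (hz'c.trans hzc.symm))
  have hpz : p ∈ z := Multiset.count_pos.1 (by omega)
  have hm1 : 1 ≤ m := hzc ▸ Multiset.card_pos_iff_exists_mem.2 ⟨p, hpz⟩
  rcases hEX D hD z z' hzS hz'S p hcp with ⟨hlt, _⟩ | ⟨q, hcq, hineq⟩
  · rw [hzc, hz'c] at hlt
    exact absurd hlt (lt_irrefl m)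
  · have hqz' : q ∈ z' := Multiset.count_pos.1 (by omega)
    have hpq : p ≠ q := by
      intro e; subst e; omega
    have hv1 : ∀ P ∈ q ::ₘ z.erase p, P ∈ S := by
      intro P hP
      rcases Multiset.mem_cons.1 hP with h | h
      · exact h ▸ hz'S q hqz'
      · exact hzS P (Multiset.mem_of_mem_erase h)
    have hc1 : Multiset.card (q ::ₘ z.erase p) = m := by
      rw [Multiset.card_cons, Multiset.card_erase_of_mem hpz, hzc]
      exact Nat.succ_pred_eq_of_pos hm1
    have ha1 : a ∈ q ::ₘ z.erase p := by
      rcases eq_or_ne p a with rfl | hpa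
      · have : 2 ≤ z.count p := by
          have : 1 ≤ z'.count p := Multiset.count_pos.2 haz'
          omega
        refine Multiset.mem_cons_of_mem ?_
        rw [← Multiset.count_pos, Multiset.count_erase_self]
        omega
      · refine Multiset.mem_cons_of_mem ?_
        rw [Multiset.mem_erase_of_ne (fun h => hpa h.symm)]
        exact haz
    have hv2 : ∀ P ∈ p ::ₘ z'.erase q, P ∈ S := by
      intro P hP
      rcases Multiset.mem_cons.1 hP with h | h
      · exact h ▸ hzS p hpz
      · exact hz'S P (Multiset.mem_of_mem_erase h)
    have hc2 : Multiset.card (p ::ₘ z'.erase q) = m := by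
      rw [Multiset.card_cons, Multiset.card_erase_of_mem hqz', hz'c]
      exact Nat.succ_pred_eq_of_pos hm1
    have ha2 : a ∈ p ::ₘ z'.erase q := by
      rcases eq_or_ne q a with rfl | hqa
      · have : 2 ≤ z'.count q := by
          have : 1 ≤ z.count q := Multiset.count_pos.2 haz
          omega
        refine Multiset.mem_cons_of_mem ?_
        rw [← Multiset.count_pos, Multiset.count_erase_self]
        omega
      · refine Multiset.mem_cons_of_mem ?_
        rw [Multiset.mem_erase_of_ne (fun h => hqa h.symm)]
        exact haz'
    have h1 := hzmin _ hv1 hc1 ha1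
    have h2 := hz'min _ hv2 hc2 ha2
    have heq : pot D (q ::ₘ z.erase p) = pot D z := le_antisymm (by linarith) h1
    have hvz : ∀ P ∈ z.erase p, P ∈ S := fun P hP => hzS P (Multiset.mem_of_mem_erase hP)
    have hcz : Multiset.card (z.erase p) + 1 ≤ N := by
      rw [Multiset.card_erase_of_mem hpz, hzc]
      have := Nat.succ_pred_eq_of_pos hm1
      omega
    refine hsw (z.erase p) hvz hcz p (hzS p hpz) q (hz'S q hqz') hpq ?_
    rw [Multiset.cons_erase hpz]
    exact heq.symm

/-- Gluing: minimizers of the shifted game are exactly constrained minimizers. -/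
lemma isMinW_of_isMin_shift {m : ℕ} {a : Finset R} (ha : a ∈ S)
    {z : Multiset (Finset R)} (h : IsMin S (shiftD D a) m z) :
    IsMinW S D (m + 1) a (a ::ₘ z) := by
  obtain ⟨hzS, hzc, hzmin⟩ := h
  refine ⟨?_, ?_, Multiset.mem_cons_self _ _, ?_⟩
  · intro P hP
    rcases Multiset.mem_cons.1 hP with h | h
    · exact h ▸ ha
    · exact hzS P h
  · rw [Multiset.card_cons, hzc]
  · intro y hy hcard hay
    have h1 := hzmin (y.erase a) (fun P hP => hy P (Multiset.mem_of_mem_erase hP))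
      (by rw [Multiset.card_erase_of_mem hay, hcard]; rfl)
    rw [pot_shiftD, pot_shiftD] at h1
    rw [Multiset.cons_erase hay] at h1
    linarith

lemma isMin_shift_of_isMinW {m : ℕ} {a : Finset R}
    {z : Multiset (Finset R)} (h : IsMinW S D (m + 1) a z) :
    IsMin S (shiftD D a) m (z.erase a) := by
  obtain ⟨hzS, hzc, haz, hzmin⟩ := h
  refine ⟨fun P hP => hzS P (Multiset.mem_of_mem_erase hP), ?_, ?_⟩
  · rw [Multiset.card_erase_of_mem haz, hzc]; rfl
  · intro y hy hcard
    have h1 := hzmin (a ::ₘ y) (fun P hP => by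
        rcases Multiset.mem_cons.1 hP with h | h
        · exact h ▸ hzS a haz
        · exact hy P h)
      (by rw [Multiset.card_cons, hcard]) (Multiset.mem_cons_self _ _)
    rw [pot_shiftD, pot_shiftD, Multiset.cons_erase haz]
    linarith

/-- Nesting of minimizers across sizes. -/
lemma isMin_nested {N : ℕ} (hS : S.Nonempty) (hTR : TRprop S) (hEX : EXSprop S)
    (hD : ∀ r, Monotone (D r)) (hsw : Swappable S D N) :
    ∀ m j, j ≤ m → m ≤ N → ∀ {zj zm}, IsMin S D j zj → IsMin S D m zm → zj ≤ zm := by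
  intro m
  induction m with
  | zero =>
    intro j hj _ zj zm hzj hzm
    interval_cases j
    have : zj = 0 := Multiset.card_eq_zero.1 hzj.2.1
    rw [this]
    exact Multiset.zero_le _
  | succ m ih =>
    intro j hj hmN zj zm hzj hzm
    rcases Nat.lt_or_ge j (m+1) with hlt | hge
    · obtain ⟨zmid, hzmid⟩ := exists_isMin (D := D) hS m
      have h1 : zj ≤ zmid := ih j (by omega) (by omega) hzj hzmid
      -- zmid ≤ zm via transfer
      obtain ⟨p, hcp, hineq⟩ := hTR D hD zm zmid hzm.1 hzmid.1
        (by rw [hzm.2.1, hzmid.2.1]; omega)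
      have hpzm : p ∈ zm := Multiset.count_pos.1 (by omega)
      have h2 := hzmid.2.2 (zm.erase p)
        (fun P hP => hzm.1 P (Multiset.mem_of_mem_erase hP))
        (by rw [Multiset.card_erase_of_mem hpzm, hzm.2.1]; rfl)
      have h3 : pot D (p ::ₘ zmid) ≤ pot D zm := by linarith
      have hmin2 : IsMin S D (m+1) (p ::ₘ zmid) := by
        refine ⟨fun P hP => ?_, by rw [Multiset.card_cons, hzmid.2.1], fun y hy hc => ?_⟩
        · rcases Multiset.mem_cons.1 hP with h | h
          · exact h ▸ hzm.1 p hpzm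
          · exact hzmid.1 P h
        · exact le_trans h3 (hzm.2.2 y hy hc)
      have := isMin_unique hEX hD hsw hmN hzm hmin2
      rw [this]
      exact le_trans h1 (Multiset.le_cons_self _ _)
    · have : j = m + 1 := by omega
      subst this
      rw [isMin_unique hEX hD hsw hmN hzj hzm]

end minimizers


section spe

open Trees

variable {S : Finset (Finset R)} {D : R → ℕ → ℝ}

lemma min_eq_of_mem {N m : ℕ} (hEX : EXSprop S) (hD : ∀ r, Monotone (D r))
    (hsw : Swappable S D N) (hmN : m + 1 ≤ N)
    {M : Multiset (Finset R)} (hM : IsMin S D (m+1) M) {a : Finset R} (haS : a ∈ S)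
    (haM : a ∈ M) {Na : Multiset (Finset R)} (hNa : IsMin S (shiftD D a) m Na) :
    M = a ::ₘ Na := by
  have h1 := isMinW_of_isMin_shift haS hNa
  have h2 : IsMinW S D (m+1) a M := ⟨hM.1, hM.2.1, haM, fun y hy hc _ => hM.2.2 y hy hc⟩
  exact isMinW_unique hEX hD hsw hmN h2 h1

lemma spe_step {N m : ℕ} (hEX : EXSprop S) (hD : ∀ r, Monotone (D r))
    (hsw : Swappable S D N) (hS : S.Nonempty) (hmN : m + 1 ≤ N)
    (Nf : Finset R → Multiset (Finset R)) (hNf : ∀ a ∈ S, IsMin S (shiftD D a) m (Nf a))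
    {b : Finset R} (hb : b ∈ S)
    (hopt : ∀ a ∈ S, pcost D (b ::ₘ Nf b) b ≤ pcost D (a ::ₘ Nf a) a) :
    IsMin S D (m+1) (b ::ₘ Nf b) := by
  obtain ⟨M, hM⟩ := exists_isMin hS (m+1)
  have hZb := isMinW_of_isMin_shift hb (hNf b hb)
  by_cases hle : pot D (b ::ₘ Nf b) ≤ pot D M
  · exact ⟨hZb.1, hZb.2.1, fun y hy hc => le_trans hle (hM.2.2 y hy hc)⟩
  · exfalso
    push_neg at hle
    by_cases hbM : b ∈ M
    · exact absurd (hZb.2.2.2 M hM.1 hM.2.1 hbM) (not_le.2 hle)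
    · have hcb : M.count b < (b ::ₘ Nf b).count b := by
        rw [Multiset.count_eq_zero_of_notMem hbM]
        exact Multiset.count_pos.2 (Multiset.mem_cons_self _ _)
      rcases hEX D hD (b ::ₘ Nf b) M hZb.1 hM.1 b hcb with ⟨hlt, _⟩ | ⟨q, hcq, hineq⟩
      · rw [hZb.2.1, hM.2.1] at hlt
        exact absurd hlt (lt_irrefl _)
      · have hqM : q ∈ M := Multiset.count_pos.1 (by omega)
        have hqS : q ∈ S := hM.1 q hqM
        have hZq := isMinW_of_isMin_shift hqS (hNf q hqS)
        have he1 : (b ::ₘ Nf b).erase b = Nf b := Multiset.erase_cons_head _ _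
        have hNfb_valid : ∀ P ∈ Nf b, P ∈ S := fun P hP =>
          hZb.1 P (Multiset.mem_cons_of_mem hP)
        have hNfb_card : Multiset.card (Nf b) = m := by
          have := hZb.2.1
          rw [Multiset.card_cons] at this
          omega
        have hv : ∀ P ∈ b ::ₘ M.erase q, P ∈ S := by
          intro P hP
          rcases Multiset.mem_cons.1 hP with h | h
          · exact h ▸ hb
          · exact hM.1 P (Multiset.mem_of_mem_erase h)
        have hc : Multiset.card (b ::ₘ M.erase q) = m + 1 := by
          rw [Multiset.card_cons, Multiset.card_erase_of_mem hqM, hM.2.1]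
          rfl
        have h4 : pot D (b ::ₘ Nf b) ≤ pot D (b ::ₘ M.erase q) :=
          hZb.2.2.2 _ hv hc (Multiset.mem_cons_self _ _)
        rw [he1] at hineq
        have h5 : pot D (q ::ₘ Nf b) ≤ pot D M := by linarith
        have hv6 : ∀ P ∈ q ::ₘ Nf b, P ∈ S := by
          intro P hP
          rcases Multiset.mem_cons.1 hP with h | h
          · exact h ▸ hqS
          · exact hNfb_valid P h
        have hc6 : Multiset.card (q ::ₘ Nf b) = m + 1 := by
          rw [Multiset.card_cons, hNfb_card]
        have h6 : pot D (q ::ₘ Nf q) ≤ pot D (q ::ₘ Nf b) :=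
          hZq.2.2.2 _ hv6 hc6 (Multiset.mem_cons_self _ _)
        have h7 : pot D M ≤ pot D (q ::ₘ Nf q) := hM.2.2 _ hZq.1 hZq.2.1
        have heq1 : pot D (q ::ₘ Nf q) = pot D (q ::ₘ Nf b) := le_antisymm h6 (by linarith)
        have hWb : IsMinW S D (m+1) q (q ::ₘ Nf b) := by
          refine ⟨hv6, hc6, Multiset.mem_cons_self _ _, fun y hy hc hqy => ?_⟩
          rw [← heq1]
          exact hZq.2.2.2 y hy hc hqy
        have heq2 := isMinW_unique hEX hD hsw hmN hZq hWb
        have hNeq : Nf q = Nf b := by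
          have := congrArg (fun z => Multiset.erase z q) heq2
          simpa [Multiset.erase_cons_head] using this
        have hvq : pcost D (q ::ₘ Nf q) q = pot D (q ::ₘ Nf q) - pot D (Nf q) := by
          rw [pcost_eq_pot_sub D _ q (Multiset.mem_cons_self _ _), Multiset.erase_cons_head]
        have hvb : pcost D (b ::ₘ Nf b) b = pot D (b ::ₘ Nf b) - pot D (Nf b) := by
          rw [pcost_eq_pot_sub D _ b (Multiset.mem_cons_self _ _), Multiset.erase_cons_head]
        have hlt2 : pcost D (q ::ₘ Nf q) q < pcost D (b ::ₘ Nf b) b := by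
          rw [hvq, hvb, hNeq]
          linarith
        exact absurd (hopt q hqS) (not_le.2 hlt2)

end spe

section glue

open Trees

variable (t : EPTree) (d : t.Arc → ℕ → ℝ) {n : ℕ}

/-- Delays at offset `w`. -/
def Dw (w : Multiset (Finset t.Arc)) : t.Arc → ℕ → ℝ := fun r y => d r (y + load w r)

/-- The configuration (multiset of chosen paths) of a profile. -/
def config {m : ℕ} (A : Fin m → Finset t.Arc) : Multiset (Finset t.Arc) :=
  (List.ofFn A : List (Finset t.Arc))

/-- `G` is the `m`-player game on `t` with offset `w`. -/
def Std {m : ℕ} (G : CGame t.Arc m) (w : Multiset (Finset t.Arc)) : Prop :=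
  (∀ i, G.actions i = t.paths) ∧ ∀ r y, G.delay r y = d r (y + load w r)

variable {t d}

lemma Dw_mono (hmono : ∀ r, Monotone (d r)) (w : Multiset (Finset t.Arc)) :
    ∀ r, Monotone (Dw t d w r) := fun r x y hxy => hmono r (by omega)

lemma Dw_cons (a : Finset t.Arc) (w : Multiset (Finset t.Arc)) :
    Dw t d (a ::ₘ w) = shiftD (Dw t d w) a := by
  funext r y
  simp only [Dw, shiftD, load_cons]
  congr 1
  omega

@[simp] lemma config_card {m : ℕ} (A : Fin m → Finset t.Arc) :
    Multiset.card (config t A) = m := by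
  simp [config]

lemma config_cons {m : ℕ} (a : Finset t.Arc) (B : Fin m → Finset t.Arc) :
    config t (Fin.cons a B) = a ::ₘ config t B := by
  rw [config, config, List.ofFn_succ]
  rfl

lemma mem_config {m : ℕ} {A : Fin m → Finset t.Arc} {P : Finset t.Arc} :
    P ∈ config t A ↔ ∃ i, A i = P := by
  rw [config]
  simp [List.mem_ofFn, eq_comm]

lemma load_config {m : ℕ} (A : Fin m → Finset t.Arc) (r : t.Arc) :
    load (config t A) r = (Finset.univ.filter fun i => r ∈ A i).card := by
  rw [Finset.card_filter, load, config]
  rw [show ((List.ofFn A : List (Finset t.Arc)) : Multiset (Finset t.Arc)).map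
      (fun P => if r ∈ P then 1 else 0)
      = ((List.ofFn A).map (fun P => if r ∈ P then 1 else 0) : List ℕ) from rfl]
  rw [Multiset.sum_coe, List.map_ofFn, List.sum_ofFn]
  rfl

lemma cost_eq_pcost {m : ℕ} {G : CGame t.Arc m} {w : Multiset (Finset t.Arc)}
    (hG : Std t d G w) (A : Fin m → Finset t.Arc) (i : Fin m) :
    G.cost A i = pcost (Dw t d w) (config t A) (A i) := by
  rw [CGame.cost, pcost]
  apply Finset.sum_congr rfl
  intro r _
  rw [hG.2, CGame.congestion, load_config]
  simp only [Dw]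

lemma subgame_std {m : ℕ} {G : CGame t.Arc (m + 1)} {w : Multiset (Finset t.Arc)}
    (hG : Std t d G w) (a : Finset t.Arc) : Std t d (G.subgame a) (a ::ₘ w) := by
  constructor
  · intro i
    exact hG.1 i.succ
  · intro r y
    show G.delay r (y + if r ∈ a then 1 else 0) = _
    rw [hG.2, load_cons]
    congr 1
    omega

lemma truncate_std {m : ℕ} {G : CGame t.Arc m} {w : Multiset (Finset t.Arc)}
    (hG : Std t d G w) (k : ℕ) : Std t d (G.truncate k) w := by
  exact ⟨fun i => hG.1 _, fun r y => hG.2 r y⟩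

lemma cost_succ {m : ℕ} {G : CGame t.Arc (m + 1)} {w : Multiset (Finset t.Arc)}
    (hG : Std t d G w) (a : Finset t.Arc) (B : Fin m → Finset t.Arc) (i : Fin m) :
    G.cost (Fin.cons a B) i.succ = (G.subgame a).cost B i := by
  rw [cost_eq_pcost hG, cost_eq_pcost (subgame_std hG a), Fin.cons_succ,
    config_cons, Dw_cons, pcost, pcost]
  apply Finset.sum_congr rfl
  intro r _
  rw [load_cons]
  simp only [shiftD, Dw]
  try congr 1
  try omega

lemma sum_range_getD (L : List (Finset t.Arc)) (r : t.Arc) :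
    (∑ i ∈ Finset.range L.length, if r ∈ L.getD i ∅ then 1 else 0)
      = load (↑L) r := by
  induction L with
  | nil => rfl
  | cons P L ih =>
    rw [List.length_cons, Finset.sum_range_succ']
    simp only [List.getD_cons_succ, List.getD_cons_zero]
    rw [ih, show ((P :: L : List (Finset t.Arc)) : Multiset (Finset t.Arc))
      = P ::ₘ (↑L) from rfl, load_cons]
    try omega

lemma count_players {n : ℕ} (L : List (Finset t.Arc)) (hL : L.length ≤ n) (r : t.Arc) :
    (Finset.univ.filter (fun i : Fin n => r ∈ L.getD (i : ℕ) ∅)).card = load (↑L) r := by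
  rw [Finset.card_filter, Fin.sum_univ_eq_sum_range (fun i => if r ∈ L.getD i ∅ then 1 else 0) n]
  rw [Finset.range_eq_Ico, ← Finset.sum_Ico_consecutive _ (Nat.zero_le L.length) hL]
  have h2 : (∑ i ∈ Finset.Ico L.length n, if r ∈ L.getD i ∅ then 1 else 0) = 0 := by
    apply Finset.sum_eq_zero
    intro i hi
    rw [List.getD_eq_default _ _ (Finset.mem_Ico.1 hi).1]
    simp
  rw [h2, ← Finset.range_eq_Ico, sum_range_getD]
  omega

lemma swappable_ambient (hgen : CGame.Generic (SNCGep t d n))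
    (w : Multiset (Finset t.Arc)) (hw : ∀ P ∈ w, P ∈ t.paths) :
    Swappable t.paths (Dw t d w) (n - Multiset.card w) := by
  intro z hz hcard p hp q hq hpq
  intro hcontra
  set L : List (Finset t.Arc) := w.toList ++ z.toList with hL
  have hLlen : L.length = Multiset.card w + Multiset.card z := by
    rw [hL, List.length_append, Multiset.length_toList, Multiset.length_toList]
  have hLcoe : (↑L : Multiset (Finset t.Arc)) = w + z := by
    rw [hL, ← Multiset.coe_add, Multiset.coe_toList, Multiset.coe_toList]
  have hlen1 : L.length + 1 ≤ n := by omega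
  set A : Fin n → Finset t.Arc := fun i => (L ++ [p]).getD (i : ℕ) ∅ with hA
  set B : Fin n → Finset t.Arc := fun i => (L ++ [q]).getD (i : ℕ) ∅ with hB
  set s : Finset (Fin n) := Finset.univ.filter (fun i : Fin n => (i : ℕ) < L.length + 1)
    with hs
  have hjlt : L.length < n := by omega
  set j : Fin n := ⟨L.length, hjlt⟩ with hj
  have hAj : A j = p := by
    show (L ++ [p]).getD (L.length) ∅ = p
    rw [List.getD_append_right _ _ _ _ (le_refl _)]
    simp
  have hBj : B j = q := by
    show (L ++ [q]).getD (L.length) ∅ = q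
    rw [List.getD_append_right _ _ _ _ (le_refl _)]
    simp
  have hmemL : ∀ P ∈ L, P ∈ t.paths := by
    intro P hP
    have : P ∈ (↑L : Multiset (Finset t.Arc)) := hP
    rw [hLcoe] at this
    rcases Multiset.mem_add.1 this with h | h
    · exact hw P h
    · exact hz P h
  have hvalid : ∀ (C : Fin n → Finset t.Arc) (c : Finset t.Arc), c ∈ t.paths →
      (C = fun i : Fin n => (L ++ [c]).getD (i : ℕ) ∅) → ∀ i ∈ s, C i ∈ (SNCGep t d n).actions i := by
    intro C c hc hC i hi
    rw [hC]
    show (L ++ [c]).getD (i : ℕ) ∅ ∈ t.paths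
    rcases Nat.lt_or_ge (i : ℕ) L.length with h | h
    · rw [List.getD_append _ _ _ _ h, List.getD_eq_getElem L ∅ h]
      exact hmemL _ (List.getElem_mem h)
    · have hi' : (i : ℕ) < L.length + 1 := by
        rw [hs] at hi
        simpa using Finset.mem_filter.1 hi |>.2
      have : (i : ℕ) = L.length := by omega
      rw [this, List.getD_append_right _ _ _ _ (le_refl _)]
      simpa using hc
  have hjs : j ∈ s := by
    rw [hs, Finset.mem_filter]
    refine ⟨Finset.mem_univ _, ?_⟩
    rw [hj]
    exact Nat.lt_succ_self _
  have hne : A j ≠ B j := by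
    rw [hAj, hBj]; exact hpq
  have hAB := hgen s A B (hvalid A p hp hA) (hvalid B q hq hB) j hjs hne
  apply hAB
  have key : ∀ (C : Fin n → Finset t.Arc) (c : Finset t.Arc), c ∈ t.paths →
      (C = fun i : Fin n => (L ++ [c]).getD (i : ℕ) ∅) → C j = c →
      CGame.costOn (SNCGep t d n) s C j
        = pot (Dw t d w) (c ::ₘ z) - pot (Dw t d w) z := by
    intro C c hc hC hCj
    rw [CGame.costOn, pot_cons' (Dw t d w) c z, pcost_cons_self]
    have harith : pot (Dw t d w) z + (∑ r ∈ c, Dw t d w r (load z r + 1))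
        - pot (Dw t d w) z = ∑ r ∈ c, Dw t d w r (load z r + 1) := by ring
    rw [harith, hCj]
    apply Finset.sum_congr rfl
    intro r hr
    have hbound : ∀ i : Fin n, r ∈ C i → (i : ℕ) < L.length + 1 := by
      intro i h2
      by_contra hcon
      push_neg at hcon
      have : C i = ∅ := by
        rw [hC]
        apply List.getD_eq_default
        rw [List.length_append, List.length_singleton]
        omega
      rw [this] at h2
      exact absurd h2 (Finset.notMem_empty r)
    have hfil : s.filter (fun i => r ∈ C i) = Finset.univ.filter (fun i => r ∈ C i) := by
      apply Finset.ext
      intro i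
      rw [hs, Finset.filter_filter, Finset.mem_filter, Finset.mem_filter]
      exact ⟨fun h => ⟨h.1, h.2.2⟩, fun h => ⟨h.1, hbound i h.2, h.2⟩⟩
    have hcnt : (Finset.univ.filter (fun i : Fin n => r ∈ C i)).card
        = load (↑(L ++ [c])) r := by
      rw [hC]
      exact count_players (L ++ [c]) (by rw [List.length_append, List.length_singleton]; omega) r
    have hload : load (↑(L ++ [c])) r = load w r + load z r + (if r ∈ c then 1 else 0) := by
      rw [show ((L ++ [c] : List (Finset t.Arc)) : Multiset (Finset t.Arc))
        = (↑L) + (↑[c]) from (Multiset.coe_add _ _).symm, load_add, hLcoe, load_add]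
      have : load (↑[c] : Multiset (Finset t.Arc)) r = (if r ∈ c then 1 else 0) := by
        show load (c ::ₘ 0) r = _
        rw [load_cons, load_zero]
        omega
      omega
    show (SNCGep t d n).delay r ((s.filter (fun i => r ∈ C i)).card) = _
    rw [hfil, hcnt, hload]
    show d r (load w r + load z r + (if r ∈ c then 1 else 0)) = Dw t d w r (load z r + 1)
    simp only [Dw]
    rw [if_pos hr]
    congr 1
    omega
  rw [key A p hp hA hAj, key B q hq hB hBj, hcontra]

end glue

section main

open Trees

variable (t : EPTree) (d : t.Arc → ℕ → ℝ) (n : ℕ)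

def SPOpart (m : ℕ) : Prop :=
  ∀ (G : CGame t.Arc m) (w : Multiset (Finset t.Arc)), Std t d G w →
    (∀ P ∈ w, P ∈ t.paths) → Multiset.card w + m ≤ n →
    ∀ A, CGame.IsSPO G A →
      IsMin t.paths (Dw t d w) m (config t A) ∧
      (∀ i j : Fin m, i ≤ j → G.cost A i ≤ G.cost A j) ∧
      (∀ hm : 0 < m, ∀ p ∈ config t A,
        G.cost A ⟨0, hm⟩ ≤ pcost (Dw t d w) (config t A) p)

def KLApart (m : ℕ) : Prop :=
  ∀ (G : CGame t.Arc m) (w : Multiset (Finset t.Arc)), Std t d G w →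
    (∀ P ∈ w, P ∈ t.paths) → Multiset.card w + m ≤ n →
    ∀ k A, CGame.IsKLA k G A → IsMin t.paths (Dw t d w) m (config t A)

variable {t d n}

lemma config_zero_isMin (w : Multiset (Finset t.Arc))
    (A : Fin 0 → Finset t.Arc) : IsMin t.paths (Dw t d w) 0 (config t A) := by
  have hc : config t A = 0 := Multiset.card_eq_zero.1 (config_card A)
  refine ⟨?_, by rw [hc]; rfl, ?_⟩
  · intro P hP
    rw [hc] at hP
    exact absurd hP (Multiset.notMem_zero P)
  · intro y hy hycard
    have : y = 0 := Multiset.card_eq_zero.1 hycard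
    rw [this, hc]

lemma spopart_step (hmono : ∀ r, Monotone (d r)) (hgen : CGame.Generic (SNCGep t d n)) :
    ∀ m, (∀ m' < m, SPOpart t d n m') → SPOpart t d n m := by
  intro m IH
  cases m with
  | zero =>
    intro G w hStd hw hbound A hA
    refine ⟨config_zero_isMin w A, fun i => i.elim0, fun hm => absurd hm (lt_irrefl 0)⟩
  | succ m' =>
    intro G w hStd hw hbound A hA
    obtain ⟨hA0, f, hf, hftail, hopt⟩ := hA
    have hswap : Swappable t.paths (Dw t d w) (n - Multiset.card w) :=
      swappable_ambient hgen w hw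
    have hmN : m' + 1 ≤ n - Multiset.card w := by omega
    have hSne := Trees.paths_nonempty t
    have hDmono := Dw_mono hmono w
    have hEX := EXSpaths t
    have hact : G.actions 0 = t.paths := hStd.1 0
    have hbS : A 0 ∈ t.paths := hact ▸ hA0
    have hwcons : ∀ a, a ∈ t.paths → ∀ P ∈ a ::ₘ w, P ∈ t.paths := by
      intro a ha P hP
      rcases Multiset.mem_cons.1 hP with h | h
      · exact h ▸ ha
      · exact hw P h
    have hNf : ∀ a ∈ t.paths,
        IsMin t.paths (shiftD (Dw t d w) a) m' (config t (f a)) := by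
      intro a ha
      have hsub := IH m' (Nat.lt_succ_self m') (G.subgame a) (a ::ₘ w)
        (subgame_std hStd a) (hwcons a ha)
        (by rw [Multiset.card_cons]; omega) (f a) (hf a (hact ▸ ha))
      have := hsub.1
      rwa [Dw_cons] at this
    have hoptp : ∀ a ∈ t.paths,
        pcost (Dw t d w) (A 0 ::ₘ config t (f (A 0))) (A 0)
          ≤ pcost (Dw t d w) (a ::ₘ config t (f a)) a := by
      intro a ha
      have h1 := hopt a (hact ▸ ha)
      rw [cost_eq_pcost hStd, cost_eq_pcost hStd, config_cons, config_cons,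
        Fin.cons_zero, Fin.cons_zero] at h1
      exact h1
    have hmin : IsMin t.paths (Dw t d w) (m' + 1) (A 0 ::ₘ config t (f (A 0))) :=
      spe_step hEX hDmono hswap hSne hmN (fun a => config t (f a)) hNf hbS hoptp
    have hconfig : config t A = A 0 ::ₘ config t (f (A 0)) := by
      conv_lhs => rw [← Fin.cons_self_tail A]
      rw [config_cons, hftail]
    have hminA : IsMin t.paths (Dw t d w) (m' + 1) (config t A) := by
      rw [hconfig]; exact hmin
    have hb3 : ∀ hm : 0 < m' + 1, ∀ p ∈ config t A,
        G.cost A ⟨0, hm⟩ ≤ pcost (Dw t d w) (config t A) p := by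
      intro hm p hp
      have hpS : p ∈ t.paths := hminA.1 p hp
      have hMp : config t A = p ::ₘ config t (f p) :=
        min_eq_of_mem hEX hDmono hswap hmN hminA hpS hp (hNf p hpS)
      have hz : (⟨0, hm⟩ : Fin (m' + 1)) = 0 := Fin.mk_zero
      rw [hz]
      calc G.cost A 0 = pcost (Dw t d w) (config t A) (A 0) := cost_eq_pcost hStd A 0
        _ = pcost (Dw t d w) (A 0 ::ₘ config t (f (A 0))) (A 0) := by rw [← hconfig]
        _ ≤ pcost (Dw t d w) (p ::ₘ config t (f p)) p := hoptp p hpS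
        _ = pcost (Dw t d w) (config t A) p := by rw [← hMp]
    refine ⟨hminA, ?_, hb3⟩
    intro i j hij
    induction i using Fin.cases with
    | zero =>
      have h0 := hb3 (Nat.succ_pos m') (A j) (mem_config.2 ⟨j, rfl⟩)
      rw [Fin.mk_zero] at h0
      rw [cost_eq_pcost hStd A j]
      exact h0
    | succ i' =>
      induction j using Fin.cases with
      | zero =>
        exfalso
        have : (i'.succ : Fin (m' + 1)).val ≤ (0 : Fin (m' + 1)).val := hij
        simp [Fin.val_succ] at this
      | succ j' =>
        have hij' : i' ≤ j' := by
          rwa [Fin.succ_le_succ_iff] at hij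
        have hsub := IH m' (Nat.lt_succ_self m') (G.subgame (A 0)) (A 0 ::ₘ w)
          (subgame_std hStd _) (hwcons _ hbS)
          (by rw [Multiset.card_cons]; omega) (f (A 0)) (hf (A 0) hA0)
        have horder := hsub.2.1 i' j' hij'
        have e : ∀ i₀ : Fin m', G.cost A i₀.succ = (G.subgame (A 0)).cost (f (A 0)) i₀ := by
          intro i₀
          conv_lhs => rw [← Fin.cons_self_tail A]
          rw [cost_succ hStd, hftail]
        rw [e i', e j']
        exact horder

lemma klapart_step (hmono : ∀ r, Monotone (d r)) (hgen : CGame.Generic (SNCGep t d n)) :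
    ∀ m, (∀ m' < m, KLApart t d n m') → (∀ m'' ≤ m, SPOpart t d n m'') →
      KLApart t d n m := by
  intro m IHk IHs
  cases m with
  | zero =>
    intro G w hStd hw hbound k A hA
    exact config_zero_isMin w A
  | succ m' =>
    intro G w hStd hw hbound k A hA
    obtain ⟨⟨hk0, B, hBspo, hB0⟩, htail⟩ := hA
    have hswap : Swappable t.paths (Dw t d w) (n - Multiset.card w) :=
      swappable_ambient hgen w hw
    have hmN : m' + 1 ≤ n - Multiset.card w := by omega
    have hSne := Trees.paths_nonempty t
    have hDmono := Dw_mono hmono w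
    have hEX := EXSpaths t
    have hspoB := IHs (min k (m' + 1)) (min_le_right _ _) (G.truncate k) w
      (truncate_std hStd k) hw (by have := min_le_right k (m' + 1); omega) B hBspo
    have hminB : IsMin t.paths (Dw t d w) (min k (m' + 1)) (config t B) := hspoB.1
    have hA0 : A 0 ∈ config t B := hB0 ▸ mem_config.2 ⟨⟨0, hk0⟩, rfl⟩
    have hA0S : A 0 ∈ t.paths := hminB.1 _ hA0
    have hwcons : ∀ P ∈ A 0 ::ₘ w, P ∈ t.paths := by
      intro P hP
      rcases Multiset.mem_cons.1 hP with h | h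
      · exact h ▸ hA0S
      · exact hw P h
    have htailmin := IHk m' (Nat.lt_succ_self m') (G.subgame (A 0)) (A 0 ::ₘ w)
      (subgame_std hStd _) hwcons (by rw [Multiset.card_cons]; omega) k (Fin.tail A) htail
    rw [Dw_cons] at htailmin
    obtain ⟨M, hM⟩ := exists_isMin (D := Dw t d w) hSne (m' + 1)
    have hle : config t B ≤ M := isMin_nested hSne (TRpaths t) hEX hDmono hswap
      (m' + 1) (min k (m' + 1)) (min_le_right _ _) hmN hminB hM
    have hA0M : A 0 ∈ M := Multiset.mem_of_le hle hA0
    have hMeq : M = A 0 ::ₘ config t (Fin.tail A) :=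
      min_eq_of_mem hEX hDmono hswap hmN hM hA0S hA0M htailmin
    have hconfig : config t A = M := by
      rw [hMeq]
      conv_lhs => rw [← Fin.cons_self_tail A]
      rw [config_cons]
    rw [hconfig]
    exact hM

lemma parts (hmono : ∀ r, Monotone (d r)) (hgen : CGame.Generic (SNCGep t d n)) :
    ∀ m, SPOpart t d n m ∧ KLApart t d n m := by
  intro m
  induction m using Nat.strong_induction_on with
  | _ m IH =>
    have hspo : SPOpart t d n m := spopart_step hmono hgen m (fun m' h => (IH m' h).1)
    have hall : ∀ m'' ≤ m, SPOpart t d n m'' := fun m'' h =>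
      h.lt_or_eq.elim (fun hlt => (IH m'' hlt).1) (fun he => he ▸ hspo)
    exact ⟨hspo, klapart_step hmono hgen m (fun m' h => (IH m' h).2) hall⟩

end main

end EPProof

/-- In a generic symmetric network congestion game on an
extension-parallel graph, in a subgame-perfect outcome `B` with respect to the order
`1,…,n` the players' costs are nondecreasing in the order, and the first player's cost
in `B` is at most his cost in any `k`-lookahead outcome with respect to that order. -/
theorem ep_generic_spo_first_player (t : EPTree) (d : t.Arc → ℕ → ℝ)
    (hmono : ∀ r, Monotone (d r)) (hnonneg : ∀ r m, 0 ≤ d r m)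
    (n : ℕ) (hn : 0 < n) (hgen : CGame.Generic (SNCGep t d n))
    (B : Fin n → Finset t.Arc) (hB : CGame.IsSPO (SNCGep t d n) B) :
    (∀ i j : Fin n, i ≤ j →
      CGame.cost (SNCGep t d n) B i ≤ CGame.cost (SNCGep t d n) B j) ∧
    (∀ k, 1 ≤ k → k ≤ n → ∀ A, CGame.IsKLA k (SNCGep t d n) A →
      CGame.cost (SNCGep t d n) B ⟨0, hn⟩ ≤ CGame.cost (SNCGep t d n) A ⟨0, hn⟩) := by
  have hStd : EPProof.Std t d (SNCGep t d n) (0 : Multiset (Finset t.Arc)) := by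
    refine ⟨fun i => rfl, fun r y => ?_⟩
    show d r y = d r (y + EPProof.load 0 r)
    rw [EPProof.load_zero, Nat.add_zero]
  have hw0 : ∀ P ∈ (0 : Multiset (Finset t.Arc)), P ∈ t.paths := fun P hP =>
    absurd hP (Multiset.notMem_zero P)
  have hb0 : Multiset.card (0 : Multiset (Finset t.Arc)) + n ≤ n := by simp
  have hparts := EPProof.parts (t := t) (d := d) (n := n) hmono hgen
  have hSPO := (hparts n).1 (SNCGep t d n) 0 hStd hw0 hb0 B hB
  constructor
  · exact hSPO.2.1
  · intro k hk1 hkn A hA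
    have hKLA := (hparts n).2 (SNCGep t d n) 0 hStd hw0 hb0 k A hA
    have hswap := EPProof.swappable_ambient hgen 0 hw0
    have heq : EPProof.config t A = EPProof.config t B :=
      EPProof.isMin_unique (EPProof.Trees.EXSpaths t) (EPProof.Dw_mono hmono 0) hswap
        (by simp) hKLA hSPO.1
    have hmem : A ⟨0, hn⟩ ∈ EPProof.config t B := by
      rw [← heq]
      exact EPProof.mem_config.2 ⟨⟨0, hn⟩, rfl⟩
    have h1 := hSPO.2.2 hn (A ⟨0, hn⟩) hmem
    have h2 : CGame.cost (SNCGep t d n) A ⟨0, hn⟩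
        = EPProof.pcost (EPProof.Dw t d 0) (EPProof.config t A) (A ⟨0, hn⟩) :=
      EPProof.cost_eq_pcost hStd A _
    rw [h2, heq]
    exact h1
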